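/- arXiv:2605.16729 — 4 statements merged into one kernel-verified Lean document; each statement's English description precedes it below -/
import Mathlib

section
/- Let a ∈ F_q, set R_a(x) := R(x) + a x, and let N := |{(x,y) ∈ F_q × F_q : y^p − y = x·R_a(x)}|. Let d := dim_{F_p} V_q. Then: (1) if there exists u ∈ V_q with Tr_{F_q/F_p}(u·R_a(u)) ≠ 0, then N = q; (2) if Tr_{F_q/F_p}(u·R_a(u)) = 0 for all u ∈ V_q, then (N − q)² = (p−1)²·q·p^d, i.e. N = q ± (p−1)√(q·p^d). -/
open Finset

open scoped Classical

noncomputable section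

/-- Length-two Witt vectors, with the operations specialised to characteristic two. -/
def W2 (R : Type*) := R × R

namespace W2

variable {R : Type*} [CommRing R]

instance : Zero (W2 R) := ⟨((0, 0) : R × R)⟩

instance : Add (W2 R) := ⟨fun x y => ((x.1 + y.1, x.2 + y.2 + x.1 * y.1) : R × R)⟩

instance [CharP R 2] : Neg (W2 R) := ⟨fun x => ((x.1, x.2 + x.1 * x.1) : R × R)⟩

theorem fst_add (x y : W2 R) : (x + y).1 = x.1 + y.1 := rfl
theorem snd_add (x y : W2 R) : (x + y).2 = x.2 + y.2 + x.1 * y.1 := rfl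
theorem fst_zero : (0 : W2 R).1 = 0 := rfl
theorem snd_zero : (0 : W2 R).2 = 0 := rfl
theorem fst_neg [CharP R 2] (x : W2 R) : (-x).1 = x.1 := rfl
theorem snd_neg [CharP R 2] (x : W2 R) : (-x).2 = x.2 + x.1 * x.1 := rfl

instance [CharP R 2] : AddCommGroup (W2 R) where
  add := (· + ·)
  zero := 0
  neg := Neg.neg
  add_assoc a b c := Prod.ext_iff.mpr (by
    constructor <;> simp only [fst_add, snd_add] <;> ring)
  zero_add a := Prod.ext_iff.mpr (by
    constructor <;> simp [fst_add, snd_add, fst_zero, snd_zero])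
  add_zero a := Prod.ext_iff.mpr (by
    constructor <;> simp [fst_add, snd_add, fst_zero, snd_zero])
  add_comm a b := Prod.ext_iff.mpr (by
    constructor <;> simp only [fst_add, snd_add] <;> ring)
  neg_add_cancel a := Prod.ext_iff.mpr (by
    constructor
    · simp only [fst_add, fst_neg, fst_zero]
      exact CharTwo.add_self_eq_zero a.1
    · simp only [snd_add, snd_neg, snd_zero, fst_neg]
      rw [show a.2 + a.1 * a.1 + a.2 + a.1 * a.1
            = (a.2 + a.2) + (a.1 * a.1 + a.1 * a.1) by ring]
      rw [CharTwo.add_self_eq_zero, CharTwo.add_self_eq_zero, add_zero])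
  nsmul := nsmulRec
  zsmul := zsmulRec

/-- Frobenius on length-two Witt vectors (characteristic two). -/
def frob (x : W2 R) : W2 R := ((x.1 ^ 2, x.2 ^ 2) : R × R)

/-- The Witt-vector trace `Tr_{q/2} = ∑_{i=0}^{n-1} Frobⁱ`. -/
def tr [CharP R 2] (n : ℕ) (x : W2 R) : W2 R := ∑ i ∈ Finset.range n, frob^[i] x

/-- The additive character of `W₂(𝔽₂)` determined by `ξ₂(1,0) = I`
(for `I` a fixed primitive fourth root of unity), evaluated on Witt vectors
whose components lie in the prime field `𝔽₂ = {0,1}`. -/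
def xi (I : ℂ) (x : W2 R) : ℂ := (if x.1 = 0 then 1 else I) * (if x.2 = 0 then 1 else -1)

end W2

variable {K : Type*}

/-- The absolute trace `Tr_{q/2} : 𝔽_q → 𝔽₂`, computed inside `K` (here `q = 2^n`). -/
def tr2 [Field K] (n : ℕ) (x : K) : K := ∑ i ∈ Finset.range n, x ^ 2 ^ i

/-- The relative trace `Tr_{q/p} : 𝔽_q → 𝔽_p ⊆ 𝔽_q`, computed inside `K`
(here `q = p^m`). -/
def trp [Field K] (p m : ℕ) (x : K) : K := ∑ i ∈ Finset.range m, x ^ p ^ i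

/-- The character `ψ_q(x) = (-1)^{Tr_{q/2}(x)}`. -/
def psiq [Field K] (n : ℕ) (x : K) : ℂ := if tr2 n x = 0 then 1 else -1

/-- The map `Q_q(x) = ξ₂(Tr_{q/2}(x,0))` on Witt vectors of length two. -/
def Qq [Field K] [CharP K 2] (I : ℂ) (n : ℕ) (x : K) : ℂ :=
  W2.xi I (W2.tr n (((x, 0) : K × K) : W2 K))

/-- The unique `2^j`-th root in a perfect field of characteristic two. -/
def rt (L : Type*) [Field L] [ExpChar L 2] [PerfectRing L 2] (j : ℕ) (x : L) : L :=
  (fun y => (frobeniusEquiv L 2).symm y)^[j] x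

/-- Evaluation of the `𝔽_p`-linearised polynomial `∑_{i=0}^{e} c_i x^{p^i}`. -/
def Lpoly [Field K] (p e : ℕ) (c : ℕ → K) (x : K) : K :=
  ∑ i ∈ Finset.range (e + 1), c i * x ^ p ^ i

/-- The adjoint `f^*(x) = ∑_{i=0}^{e} (c_i x)^{p^{-i}}` (with `p = 2^k`). -/
def adj [Field K] [ExpChar K 2] [PerfectRing K 2] (k e : ℕ) (c : ℕ → K) (x : K) : K :=
  ∑ i ∈ Finset.range (e + 1), rt K (k * i) (c i * x)

/-- Evaluation of the `𝔽_p`-linearised polynomial `∑_{i=1}^{e} c_i x^{p^i}`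
(no constant-in-`x` coefficient). -/
def LpolyIcc [Field K] (p e : ℕ) (c : ℕ → K) (x : K) : K :=
  ∑ i ∈ Finset.Icc 1 e, c i * x ^ p ^ i

/-- The adjoint `R^*(x) = ∑_{i=1}^{e} (c_i x)^{p^{-i}}` (with `p = 2^k`). -/
def adjIcc [Field K] [ExpChar K 2] [PerfectRing K 2] (k e : ℕ) (c : ℕ → K) (x : K) : K :=
  ∑ i ∈ Finset.Icc 1 e, rt K (k * i) (c i * x)

/-- The coefficients `a_i = ∑_{j=0}^{e-i} (b_j b_{j+i})^{p^{-j}}` of `R_F` (with `p = 2^k`). -/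
def aRF [Field K] [ExpChar K 2] [PerfectRing K 2] (k e : ℕ) (b : ℕ → K) (i : ℕ) : K :=
  ∑ j ∈ Finset.range (e - i + 1), rt K (k * j) (b j * b (j + i))

/-- The linearised polynomial `R_F(x) = ∑_{i=1}^{e} a_i x^{p^i}` (with `p = 2^k`). -/
def RF [Field K] [ExpChar K 2] [PerfectRing K 2] (k e : ℕ) (b : ℕ → K) (x : K) : K :=
  ∑ i ∈ Finset.Icc 1 e, aRF k e b i * x ^ (2 ^ k) ^ i

/-- `γ_F = ∑_{0 ≤ i < j ≤ e} b_i^{p^{-i}} b_j^{p^{-j}}` (with `p = 2^k`). -/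
def gammaF [Field K] [ExpChar K 2] [PerfectRing K 2] (k e : ℕ) (b : ℕ → K) : K :=
  ∑ i ∈ Finset.range (e + 1), ∑ j ∈ Finset.Ioo i (e + 1), rt K (k * i) (b i) * rt K (k * j) (b j)

/-- `α_F(t) = γ_F + F^*(t)²`. -/
def alphaF [Field K] [ExpChar K 2] [PerfectRing K 2] (k e : ℕ) (b : ℕ → K) (t : K) : K :=
  gammaF k e b + adj k e b t ^ 2

/-- `R_{F,t}(x) = R_F(x) + α_F(t) x`. -/
def RFt [Field K] [ExpChar K 2] [PerfectRing K 2] (k e : ℕ) (b : ℕ → K) (t x : K) : K :=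
  RF k e b x + alphaF k e b t * x

/-- The number of affine points of the van der Geer–van der Vlugt curve
`y^p - y = x R(x)` with coordinates in `K`. -/
def Ncount (K : Type*) [Field K] (p : ℕ) (R : K → K) : ℕ :=
  Nat.card {z : K × K // z.2 ^ p - z.2 = z.1 * R z.1}

/-- The adjoint `F^*` of `F(x) = ∑_{i=0}^{e} b_i x^{p^i}`, with coefficients `b_i ∈ K`,
viewed as a function on the algebraic closure `𝔽` of `K`. -/
def adjBar [Field K] [CharP K 2] (k e : ℕ) (b : ℕ → K) (x : AlgebraicClosure K) : AlgebraicClosure K :=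
  adj k e (fun i => algebraMap K (AlgebraicClosure K) (b i)) x

/-- `F(x) = ∑_{i=0}^{e} b_i x^{p^i}`, with coefficients `b_i ∈ K`, viewed as a function on
the algebraic closure `𝔽` of `K` (with `p = 2^k`). -/
def LpolyBar [Field K] [CharP K 2] (k e : ℕ) (b : ℕ → K) (x : AlgebraicClosure K) : AlgebraicClosure K :=
  Lpoly (2 ^ k) e (fun i => algebraMap K (AlgebraicClosure K) (b i)) x



section AUX



section RT
variable {L : Type*} [Field L] [ExpChar L 2] [PerfectRing L 2]

lemma rt_pow (j : ℕ) (x : L) : rt L j x ^ 2 ^ j = x := by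
  induction j generalizing x with
  | zero => simp [rt]
  | succ n ih =>
    have h1 : rt L (n+1) x = rt L n ((frobeniusEquiv L 2).symm x) := by
      simp [rt, Function.iterate_succ_apply]
    rw [h1, pow_succ, pow_mul, ih]
    have := (frobeniusEquiv L 2).apply_symm_apply x
    simpa [frobenius_def] using this

lemma pow2_injective (j : ℕ) : Function.Injective (fun x : L => x ^ 2 ^ j) := by
  have := (iterateFrobenius L 2 j).injective
  intro a b h
  apply this
  simpa [iterateFrobenius_def] using h

lemma rt_eq_of {j : ℕ} {x y : L} (h : y ^ 2 ^ j = x) : rt L j x = y := by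
  apply pow2_injective j
  simp only [rt_pow, h]

lemma rt_mul (j : ℕ) (x y : L) : rt L j (x * y) = rt L j x * rt L j y := by
  apply rt_eq_of; rw [mul_pow, rt_pow, rt_pow]

lemma rt_fixed {j : ℕ} {x : L} (h : x ^ 2 ^ j = x) : rt L j x = x := rt_eq_of h

lemma rt_add (j : ℕ) (x y : L) : rt L j (x + y) = rt L j x + rt L j y := by
  apply rt_eq_of
  rw [add_pow_expChar_pow, rt_pow, rt_pow]

end RT

section TR2
variable {K : Type*} [Field K] [CharP K 2]

lemma tr2_add (n : ℕ) (x y : K) : tr2 n (x + y) = tr2 n x + tr2 n y := by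
  unfold tr2
  rw [← Finset.sum_add_distrib]
  exact Finset.sum_congr rfl fun i _ => add_pow_char_pow ..

lemma tr2_zero (n : ℕ) : tr2 n (0 : K) = 0 := by
  unfold tr2; simp

lemma tr2_sq (n : ℕ) {x : K} (hx : x ^ 2 ^ n = x) : tr2 n (x ^ 2) = tr2 n x := by
  have h : tr2 n (x ^ 2) - tr2 n x = ∑ i ∈ Finset.range n, (x ^ 2 ^ (i+1) - x ^ 2 ^ i) := by
    unfold tr2
    rw [Finset.sum_sub_distrib]
    congr 1
    exact Finset.sum_congr rfl fun i _ => by rw [← pow_mul, ← pow_succ']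
  rw [Finset.sum_range_sub (fun i => x ^ 2 ^ i)] at h
  rw [pow_zero, pow_one, hx, sub_self] at h
  exact sub_eq_zero.mp h

lemma tr2_frobpow (n j : ℕ) {x : K} (hx : x ^ 2 ^ n = x) : tr2 n (x ^ 2 ^ j) = tr2 n x := by
  induction j with
  | zero => simp
  | succ i ih =>
    have h2 : x ^ 2 ^ (i+1) = (x ^ 2 ^ i) ^ 2 := by rw [← pow_mul, pow_succ]
    have hfix : (x ^ 2 ^ i) ^ 2 ^ n = x ^ 2 ^ i := by
      rw [← pow_mul, mul_comm, pow_mul, hx]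
    rw [h2, tr2_sq n hfix, ih]

lemma tr2_zero_or_one (n : ℕ) {x : K} (hx : x ^ 2 ^ n = x) : tr2 n x = 0 ∨ tr2 n x = 1 := by
  have hsq : tr2 n x ^ 2 = tr2 n x := by
    have : tr2 n x ^ 2 = tr2 n (x ^ 2) := by
      unfold tr2
      rw [show (∑ i ∈ Finset.range n, x ^ 2 ^ i) ^ 2 = frobenius K 2 (∑ i ∈ Finset.range n, x ^ 2 ^ i) from rfl]
      rw [map_sum]
      exact Finset.sum_congr rfl fun i _ => by rw [frobenius_def]; ring
    rw [this, tr2_sq n hx]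
  have hfac : tr2 n x * (tr2 n x - 1) = 0 := by linear_combination hsq
  rcases mul_eq_zero.mp hfac with h | h
  · exact Or.inl h
  · exact Or.inr (sub_eq_zero.mp h)

end TR2

open Polynomial
def psiK {K : Type*} [Field K] (n : ℕ) (x : K) : ℤ := if tr2 n x = 0 then 1 else -1

section RootCount
variable {K : Type*} [Field K]

lemma card_le_of_roots (S : Finset K) (P : K[X]) (hP : P ≠ 0)
    (h : ∀ x ∈ S, P.eval x = 0) : S.card ≤ P.natDegree := by
  have hsub : S ⊆ P.roots.toFinset := fun x hx => by
    rw [Multiset.mem_toFinset, mem_roots hP]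
    exact h x hx
  calc S.card ≤ P.roots.toFinset.card := Finset.card_le_card hsub
    _ ≤ Multiset.card P.roots := P.roots.toFinset_card_le
    _ ≤ P.natDegree := P.card_roots'

/-- The polynomial `∑_{i<n} X^(b^i)`. -/
def sumPowPoly (K : Type*) [Field K] (b n : ℕ) : K[X] := ∑ i ∈ Finset.range n, X ^ b ^ i

lemma sumPowPoly_eval (b n : ℕ) (x : K) :
    (sumPowPoly K b n).eval x = ∑ i ∈ Finset.range n, x ^ b ^ i := by
  unfold sumPowPoly
  rw [eval_finset_sum]
  simp

lemma sumPowPoly_ne_zero (b n : ℕ) (hb : 2 ≤ b) (hn : 1 ≤ n) : sumPowPoly K b n ≠ 0 := by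
  intro h
  have hc : (sumPowPoly K b n).coeff (b ^ (n-1)) = 1 := by
    unfold sumPowPoly
    rw [finset_sum_coeff]
    simp only [coeff_X_pow]
    rw [Finset.sum_eq_single (n-1)]
    · simp
    · intro i hi hne
      have : b ^ (n-1) ≠ b ^ i := fun hEq =>
        hne (Nat.pow_right_injective hb hEq.symm)
      simp [this]
    · intro hmem
      exact absurd (Finset.mem_range.mpr (by omega)) hmem
  rw [h] at hc
  simp at hc

lemma sumPowPoly_natDegree_le (b n : ℕ) (hb : 1 ≤ b) : (sumPowPoly K b n).natDegree ≤ b ^ (n-1) := by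
  unfold sumPowPoly
  apply Polynomial.natDegree_sum_le_of_forall_le
  intro i hi
  calc (X ^ b ^ i : K[X]).natDegree ≤ b ^ i := by simp
    _ ≤ b ^ (n-1) := Nat.pow_le_pow_right hb (by have := Finset.mem_range.mp hi; omega)

/-- tr2 is not identically zero on a large enough 'subfield'. -/
lemma exists_tr2_ne (n : ℕ) (hn : 1 ≤ n) (S : Finset K) (hcard : 2 ^ (n-1) < S.card)
    (hfix : ∀ x ∈ S, x ^ 2 ^ n = x) : ∃ x ∈ S, tr2 n x ≠ 0 := by
  by_contra hall
  push_neg at hall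
  have := card_le_of_roots S (sumPowPoly K 2 n) (sumPowPoly_ne_zero 2 n le_rfl hn)
    (fun x hx => by rw [sumPowPoly_eval]; exact hall x hx)
  have h2 := sumPowPoly_natDegree_le (K := K) 2 n (by norm_num)
  omega

end RootCount


section PSI
variable {K : Type*} [Field K] [CharP K 2]

lemma psiK_eq {n : ℕ} {x y : K} (h : tr2 n x = tr2 n y) : psiK n x = psiK n y := by
  unfold psiK; rw [h]

lemma psiK_zero (n : ℕ) : psiK n (0 : K) = 1 := by
  unfold psiK; rw [tr2_zero]; simp

lemma two_eq_zero : (2 : K) = 0 := by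
  exact_mod_cast CharP.cast_eq_zero K 2

lemma psiK_add (n : ℕ) {x y : K} (hx : x ^ 2 ^ n = x) (hy : y ^ 2 ^ n = y) :
    psiK n (x + y) = psiK n x * psiK n y := by
  unfold psiK
  rw [tr2_add]
  rcases tr2_zero_or_one n hx with h1 | h1 <;> rcases tr2_zero_or_one n hy with h2 | h2 <;>
      rw [h1, h2]
  · simp
  · simp [one_ne_zero]
  · simp [one_ne_zero]
  · rw [show (1 : K) + 1 = 2 by ring, two_eq_zero]; simp

lemma psiK_neg_of (n : ℕ) {x y : K} (hx : x ^ 2 ^ n = x) (hy : y ^ 2 ^ n = y)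
    (hyne : tr2 n y ≠ 0) : psiK n (x + y) = - psiK n x := by
  rw [psiK_add n hx hy]
  have : psiK n y = -1 := by unfold psiK; simp [hyne]
  rw [this]; ring

lemma add_add_self (x0 : K) (s : K) : s + x0 + x0 = s := by
  rw [add_assoc, show x0 + x0 = 2 * x0 by ring, two_eq_zero]; ring

/-- sum of a nontrivial character over a finset closed under translation is zero -/
lemma sum_psi_zero (n : ℕ) (S : Finset K) (hfix : ∀ x ∈ S, x ^ 2 ^ n = x)
    (x0 : K) (hx0S : x0 ∈ S) (hx0 : tr2 n x0 ≠ 0) (hclosed : ∀ s ∈ S, s + x0 ∈ S) :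
    ∑ s ∈ S, psiK n s = 0 := by
  have key : ∑ s ∈ S, psiK n s = ∑ s ∈ S, psiK n (s + x0) := by
    apply Finset.sum_nbij' (fun s => s + x0) (fun s => s + x0) hclosed hclosed
      (fun s _ => add_add_self x0 s) (fun s _ => add_add_self x0 s)
    intro s hs
    rw [psiK_neg_of n (hfix (s+x0) (hclosed s hs)) (hfix x0 hx0S) hx0,
      psiK_neg_of n (hfix s hs) (hfix x0 hx0S) hx0, neg_neg]
  have key2 : ∀ s ∈ S, psiK n (s + x0) = - psiK n s := fun s hs =>
    psiK_neg_of n (hfix s hs) (hfix x0 hx0S) hx0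
  rw [Finset.sum_congr rfl key2] at key
  rw [Finset.sum_neg_distrib] at key
  linarith

end PSI

section TRP
variable {K : Type*} [Field K] [CharP K 2]

lemma pow_fix_pow {k : ℕ} {μ : K} (hμ : μ ^ 2 ^ k = μ) (i : ℕ) : μ ^ 2 ^ (k * i) = μ := by
  induction i with
  | zero => simp
  | succ n ih =>
    rw [show k * (n+1) = k * n + k by ring, pow_add, pow_mul, ih, hμ]

lemma trp_add (k m : ℕ) (x y : K) :
    trp (2 ^ k) m (x + y) = trp (2 ^ k) m x + trp (2 ^ k) m y := by
  unfold trp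
  rw [← Finset.sum_add_distrib]
  refine Finset.sum_congr rfl fun i _ => ?_
  rw [← pow_mul, add_pow_char_pow]

lemma trp_smul {k : ℕ} (m : ℕ) {μ : K} (hμ : μ ^ 2 ^ k = μ) (x : K) :
    trp (2 ^ k) m (μ * x) = μ * trp (2 ^ k) m x := by
  unfold trp
  rw [Finset.mul_sum]
  refine Finset.sum_congr rfl fun i _ => ?_
  rw [mul_pow, ← pow_mul, pow_fix_pow hμ i, pow_mul]

lemma trp_zero (k m : ℕ) : trp (2 ^ k) m (0 : K) = 0 := by
  unfold trp
  exact Finset.sum_eq_zero fun i _ => zero_pow (by positivity)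

lemma pow2k_sum (k : ℕ) {s : Finset ℕ} (f : ℕ → K) :
    (∑ i ∈ s, f i) ^ 2 ^ k = ∑ i ∈ s, f i ^ 2 ^ k := by
  rw [show (∑ i ∈ s, f i) ^ 2 ^ k = iterateFrobenius K 2 k (∑ i ∈ s, f i) by
    rw [iterateFrobenius_def]]
  rw [map_sum]
  exact Finset.sum_congr rfl fun i _ => by rw [iterateFrobenius_def]

lemma trp_mem {k m : ℕ} {x : K} (hx : x ^ 2 ^ (k * m) = x) :
    trp (2 ^ k) m x ^ 2 ^ k = trp (2 ^ k) m x := by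
  have h : trp (2 ^ k) m x ^ 2 ^ k - trp (2 ^ k) m x
      = ∑ i ∈ Finset.range m, (x ^ (2^k) ^ (i+1) - x ^ (2^k) ^ i) := by
    unfold trp
    rw [pow2k_sum, Finset.sum_sub_distrib]
    congr 1
    exact Finset.sum_congr rfl fun i _ => by rw [← pow_mul, pow_succ]
  rw [Finset.sum_range_sub (fun i => x ^ (2^k) ^ i)] at h
  rw [pow_zero, pow_one, ← pow_mul, hx, sub_self] at h
  exact sub_eq_zero.mp h

lemma trp_frob {k m : ℕ} {x : K} (hx : x ^ 2 ^ (k * m) = x) :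
    trp (2 ^ k) m (x ^ 2 ^ k) = trp (2 ^ k) m x := by
  have h : trp (2 ^ k) m (x ^ 2 ^ k) - trp (2 ^ k) m x
      = ∑ i ∈ Finset.range m, (x ^ (2^k) ^ (i+1) - x ^ (2^k) ^ i) := by
    unfold trp
    rw [Finset.sum_sub_distrib]
    congr 1
    refine Finset.sum_congr rfl fun i _ => ?_
    rw [← pow_mul, ← pow_mul, ← pow_mul, ← pow_add]
    congr 2
    ring
  rw [Finset.sum_range_sub (fun i => x ^ (2^k) ^ i)] at h
  rw [pow_zero, pow_one, ← pow_mul, hx, sub_self] at h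
  exact sub_eq_zero.mp h

lemma tr2_decomp (k m : ℕ) (hk : 1 ≤ k) (x : K) :
    tr2 (k * m) x = tr2 k (trp (2 ^ k) m x) := by
  unfold tr2 trp
  have step : ∀ i, (∑ l ∈ Finset.range m, x ^ (2^k) ^ l) ^ 2 ^ i
      = ∑ l ∈ Finset.range m, x ^ 2 ^ (k * l + i) := by
    intro i
    rw [show (∑ l ∈ Finset.range m, x ^ (2^k) ^ l) ^ 2 ^ i
        = iterateFrobenius K 2 i (∑ l ∈ Finset.range m, x ^ (2^k) ^ l) by
      rw [iterateFrobenius_def]]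
    rw [map_sum]
    refine Finset.sum_congr rfl fun l _ => ?_
    rw [iterateFrobenius_def, ← pow_mul, ← pow_mul, ← pow_add]
  have key : ∑ j ∈ Finset.range (k*m), x ^ 2 ^ j
      = ∑ q ∈ Finset.range k ×ˢ Finset.range m, x ^ 2 ^ (k * q.2 + q.1) := by
    apply Finset.sum_nbij' (fun j => (j % k, j / k)) (fun q => k * q.2 + q.1)
    · intro j hj
      simp only [Finset.mem_product, Finset.mem_range] at *
      constructor
      · exact Nat.mod_lt _ (by omega)
      · exact Nat.div_lt_of_lt_mul (by omega)
    · intro q hq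
      simp only [Finset.mem_product, Finset.mem_range] at *
      calc k * q.2 + q.1 < k * q.2 + k := by omega
        _ = k * (q.2 + 1) := by ring
        _ ≤ k * m := Nat.mul_le_mul_left k (by omega)
    · intro j hj
      exact Nat.div_add_mod j k
    · intro q hq
      simp only [Finset.mem_product, Finset.mem_range] at hq
      have h1 : (k * q.2 + q.1) % k = q.1 := by
        rw [Nat.mul_add_mod, Nat.mod_eq_of_lt hq.1]
      have h2 : (k * q.2 + q.1) / k = q.2 := by
        rw [Nat.mul_add_div (by omega), Nat.div_eq_of_lt hq.1, add_zero]
      exact Prod.ext h1 h2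
    · intro j hj
      rw [Nat.div_add_mod j k]
  rw [key, Finset.sum_product]
  exact Finset.sum_congr rfl fun i _ => (step i).symm

end TRP

section COUNT
variable {K : Type*} [Field K] [Fintype K] [CharP K 2]

def Tset (K : Type*) [Field K] [Fintype K] (k : ℕ) : Finset K :=
  Finset.univ.filter (fun x => x ^ 2 ^ k = x)

lemma mem_Tset {k : ℕ} {x : K} : x ∈ Tset K k ↔ x ^ 2 ^ k = x := by
  unfold Tset; simp

lemma add_self_eq_zero' (x : K) : x + x = 0 := by
  rw [show x + x = 2 * x by ring, two_eq_zero, zero_mul]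

lemma Tset_card_le (k : ℕ) (hk : 1 ≤ k) : (Tset K k).card ≤ 2 ^ k := by
  classical
  set P : Polynomial K := Polynomial.X ^ 2 ^ k + Polynomial.X with hP
  have hPne : P ≠ 0 := by
    intro h
    have hc : P.coeff (2 ^ k) = 1 := by
      have h2k : 2 ≤ 2 ^ k := by calc 2 = 2^1 := rfl
                                    _ ≤ 2^k := Nat.pow_le_pow_right (by norm_num) hk
      rw [hP, Polynomial.coeff_add, Polynomial.coeff_X_pow, if_pos rfl,
        Polynomial.coeff_X, if_neg (by omega), add_zero]
    rw [h] at hc; simp at hc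
  have hdeg : P.natDegree ≤ 2 ^ k := by
    rw [hP]
    refine le_trans (Polynomial.natDegree_add_le _ _) ?_
    simp only [Polynomial.natDegree_X_pow, Polynomial.natDegree_X]
    have : 1 ≤ 2 ^ k := Nat.one_le_two_pow
    omega
  refine le_trans (card_le_of_roots (Tset K k) P hPne ?_) hdeg
  intro x hx
  rw [mem_Tset] at hx
  rw [hP]
  simp [hx, add_self_eq_zero']

lemma Zset_card_le (k m : ℕ) (hk : 1 ≤ k) (hm : 1 ≤ m) :
    (Finset.univ.filter (fun t : K => trp (2 ^ k) m t = 0)).card ≤ 2 ^ (k * (m - 1)) := by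
  have hb : 2 ≤ 2 ^ k := by calc 2 = 2^1 := rfl
                                _ ≤ 2^k := Nat.pow_le_pow_right (by norm_num) hk
  have h1 := card_le_of_roots (Finset.univ.filter (fun t : K => trp (2 ^ k) m t = 0))
    (sumPowPoly K (2 ^ k) m) (sumPowPoly_ne_zero (2 ^ k) m hb hm) ?_
  · refine le_trans h1 (le_trans (sumPowPoly_natDegree_le (2^k) m (by omega)) ?_)
    rw [← pow_mul]
  · intro x hx
    rw [Finset.mem_filter] at hx
    rw [sumPowPoly_eval]
    exact hx.2

/-- If the fiber of `y ↦ y^(2^k) + y` over `t` is nonempty, it has `|Tset|` elements. -/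
lemma fiber_card_of_mem {k : ℕ} {t y0 : K} (hy0 : y0 ^ 2 ^ k + y0 = t) :
    (Finset.univ.filter (fun y : K => y ^ 2 ^ k + y = t)).card = (Tset K k).card := by
  classical
  symm
  apply Finset.card_nbij' (fun lam => lam + y0) (fun y => y + y0)
  · intro lam hlam
    rw [Finset.mem_coe, mem_Tset] at hlam
    simp only [Finset.mem_coe, Finset.mem_filter, Finset.mem_univ, true_and]
    rw [show (lam + y0) ^ 2 ^ k = lam ^ 2 ^ k + y0 ^ 2 ^ k from add_pow_char_pow ..]
    rw [hlam]
    calc lam + y0 ^ 2 ^ k + (lam + y0) = (lam + lam) + (y0 ^ 2 ^ k + y0) := by ring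
      _ = t := by rw [add_self_eq_zero', hy0, zero_add]
  · intro y hy
    simp only [Finset.mem_coe, Finset.mem_filter, Finset.mem_univ, true_and] at hy
    rw [Finset.mem_coe, mem_Tset]
    show (y + y0) ^ 2 ^ k = y + y0
    rw [show (y + y0) ^ 2 ^ k = y ^ 2 ^ k + y0 ^ 2 ^ k from add_pow_char_pow ..]
    have this : (y ^ 2 ^ k + y0 ^ 2 ^ k) + (y + y0) = (y ^ 2 ^ k + y) + (y0 ^ 2 ^ k + y0) := by
      ring
    rw [hy, hy0, add_self_eq_zero'] at this
    -- (y+y0)^(2^k) + (y+y0) = 0 => equal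
    have h2 : y ^ 2 ^ k + y0 ^ 2 ^ k + (y + y0) + (y + y0) = y + y0 := by
      rw [this, zero_add]
    rw [← h2]
    rw [add_assoc, add_self_eq_zero', add_zero]
  · intro lam _; show lam + y0 + y0 = lam; rw [add_assoc, add_self_eq_zero', add_zero]
  · intro y _; show y + y0 + y0 = y; rw [add_assoc, add_self_eq_zero', add_zero]

lemma engine (k m : ℕ) (hk : 1 ≤ k) (hm : 1 ≤ m) (hcard : Fintype.card K = 2 ^ (k * m)) :
    (Tset K k).card = 2 ^ k ∧
    (∀ t : K, (Finset.univ.filter (fun y : K => y ^ 2 ^ k + y = t)).card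
      = if trp (2 ^ k) m t = 0 then 2 ^ k else 0) := by
  classical
  set f : K → K := fun y => y ^ 2 ^ k + y with hf
  set I : Finset K := Finset.univ.image f with hI
  set Z : Finset K := Finset.univ.filter (fun t : K => trp (2 ^ k) m t = 0) with hZ
  have hfixK : ∀ x : K, x ^ 2 ^ (k * m) = x := fun x => by
    rw [← hcard]; exact FiniteField.pow_card x
  have hIZ : I ⊆ Z := by
    intro t ht
    rw [hI, Finset.mem_image] at ht
    obtain ⟨y, _, hy⟩ := ht
    rw [hZ, Finset.mem_filter]
    refine ⟨Finset.mem_univ t, ?_⟩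
    rw [← hy, hf]
    rw [trp_add, trp_frob (hfixK y), add_self_eq_zero']
  have hsum : ∑ t ∈ I, (Finset.univ.filter (fun y : K => f y = t)).card = 2 ^ (k * m) := by
    rw [← hcard, ← Finset.card_eq_sum_card_fiberwise (fun y _ => Finset.mem_image_of_mem f (Finset.mem_univ y))]
    exact (Finset.card_univ)
  have hconst : ∀ t ∈ I, (Finset.univ.filter (fun y : K => f y = t)).card = (Tset K k).card := by
    intro t ht
    rw [hI, Finset.mem_image] at ht
    obtain ⟨y0, _, hy0⟩ := ht
    exact fiber_card_of_mem hy0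
  have hqIT : I.card * (Tset K k).card = 2 ^ (k * m) := by
    rw [← hsum, Finset.sum_congr rfl hconst, Finset.sum_const, smul_eq_mul]
  have hIle : I.card ≤ 2 ^ (k * (m - 1)) := le_trans (Finset.card_le_card hIZ) (Zset_card_le k m hk hm)
  have hTle : (Tset K k).card ≤ 2 ^ k := Tset_card_le k hk
  have hsplit : 2 ^ (k * (m-1)) * 2 ^ k = 2 ^ (k * m) := by
    rw [← pow_add]
    congr 1
    obtain ⟨m', rfl⟩ : ∃ m', m = m' + 1 := ⟨m - 1, by omega⟩
    simp [Nat.mul_add, Nat.mul_succ]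
  have hIpos : 0 < 2 ^ (k * (m-1)) := Nat.pow_pos (by norm_num)
  have hTpos : 0 < 2 ^ k := Nat.pow_pos (by norm_num)
  have hIeq : I.card = 2 ^ (k * (m-1)) := by nlinarith
  have hTeq : (Tset K k).card = 2 ^ k := by nlinarith
  have hZle : Z.card ≤ 2 ^ (k * (m-1)) := Zset_card_le k m hk hm
  have hIZeq : I = Z := Finset.eq_of_subset_of_card_le hIZ (by omega)
  refine ⟨hTeq, fun t => ?_⟩
  by_cases ht : trp (2 ^ k) m t = 0
  · rw [if_pos ht]
    have htI : t ∈ I := by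
      rw [hIZeq, hZ, Finset.mem_filter]; exact ⟨Finset.mem_univ t, ht⟩
    rw [hconst t htI]
    exact hTeq
  · rw [if_neg ht]
    rw [Finset.card_eq_zero]
    rw [Finset.filter_eq_empty_iff]
    intro y _
    intro hy
    apply ht
    rw [← hy, trp_add, trp_frob (hfixK y), add_self_eq_zero']
end COUNT

section POLYS
variable {K : Type*} [Field K] [Fintype K] [CharP K 2]


lemma tr2_sum (n : ℕ) {s : Finset ℕ} (f : ℕ → K) :
    tr2 n (∑ i ∈ s, f i) = ∑ i ∈ s, tr2 n (f i) := by
  classical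
  induction s using Finset.cons_induction with
  | empty => simp [tr2_zero]
  | cons i s hi ih => rw [Finset.sum_cons, Finset.sum_cons, tr2_add, ih]

lemma Tset_mul_mem {k : ℕ} {x y : K} (hx : x ∈ Tset K k) (hy : y ∈ Tset K k) :
    x * y ∈ Tset K k := by
  rw [mem_Tset] at *
  rw [mul_pow, hx, hy]

lemma Tset_add_mem {k : ℕ} {x y : K} (hx : x ∈ Tset K k) (hy : y ∈ Tset K k) :
    x + y ∈ Tset K k := by
  rw [mem_Tset] at *
  rw [add_pow_char_pow, hx, hy]

lemma Tset_zero_mem (k : ℕ) : (0 : K) ∈ Tset K k := by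
  rw [mem_Tset]; exact zero_pow (by positivity)

lemma Tset_one_mem (k : ℕ) : (1 : K) ∈ Tset K k := by
  rw [mem_Tset]; exact one_pow _

lemma Tset_sq_mul_surj {k : ℕ} {s : K} (hs : s ∈ Tset K k) (hs0 : s ≠ 0)
    {w : K} (hw : w ∈ Tset K k) : ∃ μ ∈ Tset K k, μ ^ 2 * s = w := by
  classical
  set F : K → K := fun μ => μ ^ 2 * s with hF
  have himg : (Tset K k).image F ⊆ Tset K k := by
    intro z hz
    rw [Finset.mem_image] at hz
    obtain ⟨μ, hμ, rfl⟩ := hz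
    have hFμ : F μ = μ * μ * s := by rw [hF]; ring
    rw [hFμ]
    exact Tset_mul_mem (Tset_mul_mem hμ hμ) hs
  have hinj : Set.InjOn F (Tset K k) := by
    intro x hx y hy hxy
    rw [hF] at hxy
    simp only at hxy
    have h2 : x ^ 2 = y ^ 2 := by
      exact mul_right_cancel₀ hs0 hxy
    exact pow2_injective 1 (by simpa using h2)
  have hcardimg : ((Tset K k).image F).card = (Tset K k).card :=
    Finset.card_image_of_injOn hinj
  have heq : (Tset K k).image F = Tset K k :=
    Finset.eq_of_subset_of_card_le himg (by omega)
  have : w ∈ (Tset K k).image F := by rw [heq]; exact hw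
  rw [Finset.mem_image] at this
  obtain ⟨μ, hμ, hμw⟩ := this
  exact ⟨μ, hμ, hμw⟩

variable (k e : ℕ) (c : ℕ → K)

lemma Lpoly_add (x y : K) : LpolyIcc (2^k) e c (x + y) = LpolyIcc (2^k) e c x + LpolyIcc (2^k) e c y := by
  unfold LpolyIcc
  rw [← Finset.sum_add_distrib]
  refine Finset.sum_congr rfl fun i _ => ?_
  rw [← pow_mul, add_pow_char_pow, mul_add]

lemma adjIcc' (x : K) : (∑ i ∈ Finset.Icc 1 e, rt K (k * i) (c i * x)) = ∑ i ∈ Finset.Icc 1 e, rt K (k * i) (c i * x) := rfl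

lemma adj_add (x y : K) :
    (∑ i ∈ Finset.Icc 1 e, rt K (k * i) (c i * (x + y)))
      = (∑ i ∈ Finset.Icc 1 e, rt K (k * i) (c i * x))
        + ∑ i ∈ Finset.Icc 1 e, rt K (k * i) (c i * y) := by
  rw [← Finset.sum_add_distrib]
  refine Finset.sum_congr rfl fun i _ => ?_
  rw [mul_add, rt_add]

lemma Lpoly_smul {μ : K} (hμ : μ ^ 2 ^ k = μ) (x : K) :
    LpolyIcc (2^k) e c (μ * x) = μ * LpolyIcc (2^k) e c x := by
  unfold LpolyIcc
  rw [Finset.mul_sum]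
  refine Finset.sum_congr rfl fun i _ => ?_
  rw [mul_pow, ← pow_mul, pow_fix_pow hμ i, pow_mul]
  ring

lemma adj_smul {μ : K} (hμ : μ ^ 2 ^ k = μ) (x : K) :
    (∑ i ∈ Finset.Icc 1 e, rt K (k * i) (c i * (μ * x)))
      = μ * ∑ i ∈ Finset.Icc 1 e, rt K (k * i) (c i * x) := by
  rw [Finset.mul_sum]
  refine Finset.sum_congr rfl fun i _ => ?_
  rw [show c i * (μ * x) = μ * (c i * x) by ring, rt_mul, rt_fixed (pow_fix_pow hμ i)]

/-- the adjoint trace identity -/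
lemma tr2_adjoint (n : ℕ) (hfix : ∀ z : K, z ^ 2 ^ n = z) (hkn : ∀ i, i ≤ e → k * i ≤ n → True) (x y : K) :
    tr2 n (x * LpolyIcc (2^k) e c y)
      = tr2 n ((∑ i ∈ Finset.Icc 1 e, rt K (k * i) (c i * x)) * y) := by
  unfold LpolyIcc
  rw [Finset.mul_sum, Finset.sum_mul, tr2_sum, tr2_sum]
  refine Finset.sum_congr rfl fun i _ => ?_
  have hpow : (rt K (k * i) (c i * x) * y) ^ 2 ^ (k * i) = x * (c i * y ^ (2^k) ^ i) := by
    rw [mul_pow, rt_pow, ← pow_mul, mul_comm k i, pow_mul]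
    ring
  rw [← hpow, tr2_frobpow n (k*i) (hfix _)]

end POLYS

end AUX

/-- Point counts of the twists `y^p - y = x R_a(x)`. -/
theorem statement3 {K : Type*} [Field K] [Fintype K] [CharP K 2]
    (k m e : ℕ) (hk : 1 ≤ k) (hm : 1 ≤ m) (he : 1 ≤ e)
    (hcard : Fintype.card K = 2 ^ (k * m))
    (c : ℕ → K) (hce : c e ≠ 0)
    (a : K) (d : ℕ)
    (hd : Nat.card {u : K // LpolyIcc (2 ^ k) e c u + adjIcc k e c u = 0} = (2 ^ k) ^ d) :
    ((∃ u : K, LpolyIcc (2 ^ k) e c u + adjIcc k e c u = 0 ∧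
        trp (2 ^ k) m (u * (LpolyIcc (2 ^ k) e c u + a * u)) ≠ 0) →
      (Ncount K (2 ^ k) (fun x => LpolyIcc (2 ^ k) e c x + a * x) : ℤ) = 2 ^ (k * m)) ∧
    ((∀ u : K, LpolyIcc (2 ^ k) e c u + adjIcc k e c u = 0 →
        trp (2 ^ k) m (u * (LpolyIcc (2 ^ k) e c u + a * u)) = 0) →
      ((Ncount K (2 ^ k) (fun x => LpolyIcc (2 ^ k) e c x + a * x) : ℤ) - 2 ^ (k * m)) ^ 2
        = (2 ^ k - 1) ^ 2 * 2 ^ (k * m) * (2 ^ k) ^ d) := by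
  classical
  have hfixK : ∀ z : K, z ^ 2 ^ (k * m) = z := fun z => by
    rw [← hcard]; exact FiniteField.pow_card z
  obtain ⟨hTcard, hfiber⟩ := engine k m hk hm hcard
  have hkm : 1 ≤ k * m := le_trans hk (Nat.le_mul_of_pos_right k (by omega))
  set R : K → K := LpolyIcc (2 ^ k) e c with hRdef
  set A : K → K := adjIcc k e c with hAdef
  have hAsum : ∀ x : K, A x = ∑ i ∈ Finset.Icc 1 e, rt K (k * i) (c i * x) := fun x => rfl
  set g : K → K := fun x => x * (R x + a * x) with hgdef
  have hgapp : ∀ x : K, g x = x * (R x + a * x) := fun x => rfl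
  -- structural lemmas
  have hgexp : ∀ x h : K, g (x + h) = g x + g h + (x * R h + h * R x) := by
    intro x h
    have hL : R (x + h) = R x + R h := Lpoly_add k e c x h
    have h2 : (2 : K) = 0 := two_eq_zero
    simp only [hgapp]
    linear_combination (x + h) * hL + (a * x * h) * h2
  have hgscale : ∀ μ : K, μ ∈ Tset K k → ∀ x : K, g (μ * x) = μ ^ 2 * g x := by
    intro μ hμ x
    simp only [hgapp]
    rw [hRdef, Lpoly_smul k e c (mem_Tset.mp hμ) x]
    ring
  have hEscale : ∀ μ : K, μ ∈ Tset K k → ∀ x : K,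
      R (μ * x) + A (μ * x) = μ * (R x + A x) := by
    intro μ hμ x
    rw [hAsum, hAsum, hRdef, Lpoly_smul k e c (mem_Tset.mp hμ) x,
      adj_smul k e c (mem_Tset.mp hμ) x]
    ring
  have htr2cross : ∀ x y : K, tr2 (k * m) (x * R y + y * R x)
      = tr2 (k * m) (x * (R y + A y)) := by
    intro x y
    have h1 : tr2 (k * m) (y * R x) = tr2 (k * m) (A y * x) := by
      rw [hAsum y, hRdef]
      exact tr2_adjoint k e c (k * m) hfixK (fun _ _ _ => trivial) y x
    rw [tr2_add, h1, ← tr2_add]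
    congr 1
    ring
  -- Step 1 : N as a fiber count
  have hN1 : Ncount K (2 ^ k) (fun x => R x + a * x)
      = ∑ x : K, if trp (2 ^ k) m (g x) = 0 then 2 ^ k else 0 := by
    unfold Ncount
    rw [Nat.card_congr (Equiv.subtypeProdEquivSigmaSubtype
      (fun x y : K => y ^ 2 ^ k - y = x * (R x + a * x)))]
    rw [Nat.card_eq_fintype_card, Fintype.card_sigma]
    refine Finset.sum_congr rfl fun x _ => ?_
    rw [Fintype.card_subtype, ← hfiber (g x)]
    congr 1
    ext y
    simp only [Finset.mem_filter, Finset.mem_univ, true_and]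
    rw [CharTwo.sub_eq_add, hgapp]
  -- Step 2 : character expansion
  have hN2 : (Ncount K (2 ^ k) (fun x => R x + a * x) : ℤ)
      = ∑ x : K, ∑ lam ∈ Tset K k, psiK (k * m) (lam * g x) := by
    rw [hN1]
    push_cast
    refine Finset.sum_congr rfl fun x _ => ?_
    have hgT : trp (2 ^ k) m (g x) ^ 2 ^ k = trp (2 ^ k) m (g x) := trp_mem (hfixK (g x))
    by_cases ht : trp (2 ^ k) m (g x) = 0
    · rw [if_pos ht]
      have hone : ∀ lam ∈ Tset K k, psiK (k * m) (lam * g x) = 1 := by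
        intro lam hlam
        unfold psiK
        rw [tr2_decomp k m hk, trp_smul m (mem_Tset.mp hlam), ht, mul_zero, tr2_zero, if_pos rfl]
      rw [Finset.sum_congr rfl hone, Finset.sum_const, hTcard]
      simp
    · rw [if_neg ht]
      have hrw : ∀ lam ∈ Tset K k, psiK (k * m) (lam * g x)
          = psiK k (lam * trp (2 ^ k) m (g x)) := by
        intro lam hlam
        unfold psiK
        rw [tr2_decomp k m hk, trp_smul m (mem_Tset.mp hlam)]
      rw [Finset.sum_congr rfl hrw]
      have htT : trp (2 ^ k) m (g x) ∈ Tset K k := mem_Tset.mpr hgT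
      have hbij : ∑ lam ∈ Tset K k, psiK k (lam * trp (2 ^ k) m (g x))
          = ∑ mu ∈ Tset K k, psiK k mu := by
        apply Finset.sum_nbij' (fun lam => lam * trp (2 ^ k) m (g x))
          (fun mu => mu * (trp (2 ^ k) m (g x))⁻¹)
        · intro lam hlam; exact Tset_mul_mem hlam htT
        · intro mu hmu
          refine Tset_mul_mem hmu (mem_Tset.mpr ?_)
          rw [inv_pow, hgT]
        · intro lam _
          rw [mul_assoc, mul_inv_cancel₀ ht, mul_one]
        · intro mu _
          rw [mul_assoc, inv_mul_cancel₀ ht, mul_one]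
        · intro lam _; rfl
      rw [hbij]
      obtain ⟨x0, hx0T, hx0⟩ := exists_tr2_ne k hk (Tset K k)
        (by rw [hTcard]; exact Nat.pow_lt_pow_right (by norm_num) (by omega))
        (fun z hz => mem_Tset.mp hz)
      exact (sum_psi_zero k (Tset K k) (fun z hz => mem_Tset.mp hz) x0 hx0T hx0
        (fun s hs => Tset_add_mem hs hx0T)).symm
  -- Step 3 : N = q + (p-1) S
  set S : ℤ := ∑ x : K, psiK (k * m) (g x) with hSdef
  have hNS : (Ncount K (2 ^ k) (fun x => R x + a * x) : ℤ)
      = 2 ^ (k * m) + ((2 : ℤ) ^ k - 1) * S := by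
    rw [hN2, Finset.sum_comm, ← Finset.add_sum_erase _ _ (Tset_zero_mem k)]
    have hzero : ∑ x : K, psiK (k * m) ((0 : K) * g x) = (2 : ℤ) ^ (k * m) := by
      have h1 : ∀ x : K, psiK (k * m) ((0 : K) * g x) = 1 := fun x => by
        rw [zero_mul]; exact psiK_zero _
      rw [Finset.sum_congr rfl (fun x _ => h1 x), Finset.sum_const, Finset.card_univ, hcard]
      push_cast; ring
    rw [hzero]
    congr 1
    have hlam : ∀ lam ∈ (Tset K k).erase 0, (∑ x : K, psiK (k * m) (lam * g x)) = S := by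
      intro lam hl
      obtain ⟨hlne, hlT⟩ := Finset.mem_erase.mp hl
      obtain ⟨μ, hμT, hμ2⟩ := Tset_sq_mul_surj (Tset_one_mem k) one_ne_zero hlT
      rw [mul_one] at hμ2
      have hμ0 : μ ≠ 0 := by
        rintro rfl
        apply hlne
        rw [← hμ2]; ring
      have hgs : ∀ x : K, lam * g x = g (μ * x) := fun x => by
        rw [hgscale μ hμT x, hμ2]
      rw [Finset.sum_congr rfl (fun x _ => by rw [hgs x])]
      exact Fintype.sum_equiv (Equiv.mulLeft₀ μ hμ0) _ _ (fun x => rfl)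
    rw [Finset.sum_congr rfl hlam, Finset.sum_const,
      Finset.card_erase_of_mem (Tset_zero_mem k), hTcard, nsmul_eq_mul]
    congr 1
    push_cast [Nat.cast_sub (Nat.one_le_two_pow)]
    ring
  constructor
  -- Case 1
  · rintro ⟨u, huE, hune⟩
    obtain ⟨w, hwT, hwne⟩ := exists_tr2_ne k hk (Tset K k)
      (by rw [hTcard]; exact Nat.pow_lt_pow_right (by norm_num) (by omega))
      (fun z hz => mem_Tset.mp hz)
    have hsT : trp (2 ^ k) m (g u) ∈ Tset K k := mem_Tset.mpr (trp_mem (hfixK _))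
    have hune' : trp (2 ^ k) m (g u) ≠ 0 := hune
    obtain ⟨μ, hμT, hμ2⟩ := Tset_sq_mul_surj hsT hune' hwT
    have hμsqT : μ ^ 2 ∈ Tset K k := by
      rw [sq]; exact Tset_mul_mem hμT hμT
    have hEv : R (μ * u) + A (μ * u) = 0 := by
      rw [hEscale μ hμT u, huE, mul_zero]
    have hgv : tr2 (k * m) (g (μ * u)) ≠ 0 := by
      rw [hgscale μ hμT u, tr2_decomp k m hk, trp_smul m (mem_Tset.mp hμsqT), hμ2]
      exact hwne
    have hSflip : S = -S := by
      calc S = ∑ x : K, psiK (k * m) (g (x + μ * u)) :=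
            (Fintype.sum_equiv (Equiv.addRight (μ * u)) _ _ (fun x => rfl)).symm
        _ = ∑ x : K, -psiK (k * m) (g x) := by
            refine Finset.sum_congr rfl fun x _ => ?_
            have h1 : tr2 (k * m) (g (x + μ * u)) = tr2 (k * m) (g x + g (μ * u)) := by
              rw [hgexp x (μ * u), tr2_add, htr2cross x (μ * u), hEv, mul_zero, tr2_zero, add_zero]
            rw [psiK_eq h1, psiK_add (k * m) (hfixK (g x)) (hfixK (g (μ * u)))]
            have h2 : psiK (k * m) (g (μ * u)) = -1 := by
              unfold psiK; rw [if_neg hgv]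
            rw [h2]; ring
        _ = -S := by rw [← Finset.sum_neg_distrib]
    have hS0 : S = 0 := by omega
    rw [hNS, hS0]; ring
  -- Case 2
  · intro hall
    have hVcard : ((Finset.univ.filter (fun u : K => R u + A u = 0)).card : ℤ)
        = ((2 : ℤ) ^ k) ^ d := by
      have h1 : Nat.card {u : K // R u + A u = 0} = (2 ^ k) ^ d := hd
      rw [Nat.card_eq_fintype_card, Fintype.card_subtype] at h1
      rw [h1]; push_cast; ring
    have hSsq : S * S = 2 ^ (k * m) * ((2 : ℤ) ^ k) ^ d := by
      have e1 : S * S = ∑ y : K, ∑ x : K, psiK (k * m) (g x) * psiK (k * m) (g y) := by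
        rw [hSdef, Finset.sum_mul_sum, Finset.sum_comm]
      have e2 : ∀ y : K, ∑ x : K, psiK (k * m) (g x) * psiK (k * m) (g y)
          = ∑ h : K, psiK (k * m) (g h) * psiK (k * m) (y * (R h + A h)) := by
        intro y
        have e2a : ∑ x : K, psiK (k * m) (g x) * psiK (k * m) (g y)
            = ∑ h : K, psiK (k * m) (g (h + y)) * psiK (k * m) (g y) :=
          (Fintype.sum_equiv (Equiv.addRight y) _ _ (fun h => rfl)).symm
        rw [e2a]
        refine Finset.sum_congr rfl fun h _ => ?_
        rw [← psiK_add (k * m) (hfixK (g (h + y))) (hfixK (g y)),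
            ← psiK_add (k * m) (hfixK (g h)) (hfixK (y * (R h + A h)))]
        apply psiK_eq
        rw [tr2_add, tr2_add, hgexp h y, tr2_add, tr2_add]
        have hcr : tr2 (k * m) (h * R y + y * R h) = tr2 (k * m) (y * (R h + A h)) := by
          rw [add_comm (h * R y) (y * R h)]
          exact htr2cross y h
        rw [hcr]
        rw [show tr2 (k*m) (g h) + tr2 (k*m) (g y) + tr2 (k*m) (y * (R h + A h)) + tr2 (k*m) (g y)
          = tr2 (k*m) (g h) + tr2 (k*m) (y * (R h + A h)) + (tr2 (k*m) (g y) + tr2 (k*m) (g y)) by ring]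
        rw [add_self_eq_zero', add_zero]
      have e3 : S * S = ∑ h : K, psiK (k * m) (g h) * ∑ y : K, psiK (k * m) (y * (R h + A h)) := by
        rw [e1, Finset.sum_congr rfl (fun y _ => e2 y), Finset.sum_comm]
        exact Finset.sum_congr rfl fun h _ => by rw [Finset.mul_sum]
      have e4 : ∀ h : K, (∑ y : K, psiK (k * m) (y * (R h + A h)))
          = if R h + A h = 0 then (2 : ℤ) ^ (k * m) else 0 := by
        intro h
        by_cases hE : R h + A h = 0
        · rw [if_pos hE]
          have h1 : ∀ y : K, psiK (k * m) (y * (R h + A h)) = 1 := fun y => by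
            rw [hE, mul_zero]; exact psiK_zero _
          rw [Finset.sum_congr rfl (fun y _ => h1 y), Finset.sum_const, Finset.card_univ, hcard]
          push_cast; ring
        · rw [if_neg hE]
          have h1 : ∑ y : K, psiK (k * m) (y * (R h + A h)) = ∑ z : K, psiK (k * m) z :=
            Fintype.sum_equiv (Equiv.mulRight₀ (R h + A h) hE) _ _ (fun y => rfl)
          rw [h1]
          obtain ⟨x0, hx0T, hx0⟩ := exists_tr2_ne (k * m) hkm Finset.univ
            (by rw [Finset.card_univ, hcard]; exact Nat.pow_lt_pow_right (by norm_num) (by omega))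
            (fun z _ => hfixK z)
          exact sum_psi_zero (k * m) Finset.univ (fun z _ => hfixK z) x0 (Finset.mem_univ x0)
            hx0 (fun s _ => Finset.mem_univ _)
      have e5 : S * S = ∑ h ∈ Finset.univ.filter (fun h : K => R h + A h = 0),
          psiK (k * m) (g h) * (2 : ℤ) ^ (k * m) := by
        rw [e3]
        have hsw : ∀ h : K, psiK (k * m) (g h) * ∑ y : K, psiK (k * m) (y * (R h + A h))
            = if R h + A h = 0 then psiK (k * m) (g h) * (2 : ℤ) ^ (k * m) else 0 := by
          intro h; rw [e4 h, mul_ite, mul_zero]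
        rw [Finset.sum_congr rfl (fun h _ => hsw h), ← Finset.sum_filter]
      have e6 : ∀ h ∈ Finset.univ.filter (fun h : K => R h + A h = 0),
          psiK (k * m) (g h) * (2 : ℤ) ^ (k * m) = (2 : ℤ) ^ (k * m) := by
        intro h hh
        rw [Finset.mem_filter] at hh
        have h0 : trp (2 ^ k) m (g h) = 0 := hall h hh.2
        have h1 : psiK (k * m) (g h) = 1 := by
          unfold psiK
          rw [tr2_decomp k m hk, h0, tr2_zero, if_pos rfl]
        rw [h1, one_mul]
      rw [e5, Finset.sum_congr rfl e6, Finset.sum_const, nsmul_eq_mul]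
      rw [show ((Finset.univ.filter (fun h : K => R h + A h = 0)).card : ℤ) = ((2:ℤ)^k)^d from hVcard]
      ring
    rw [hNS]
    rw [show (2:ℤ) ^ (k*m) + ((2:ℤ)^k - 1) * S - 2 ^ (k*m) = ((2:ℤ)^k - 1) * S by ring]
    rw [mul_pow, pow_two S, hSsq]
    ring


end
end

section
/- Let r = 2^s be a power of 2 and let t_0 be an element of an algebraic closure 𝔽 of F_2 satisfying t_0^r + t_0 = 1. Then: (1) t_0 ∈ F_{r²}; (2) t_0^{r+1} ∈ F_r; (3) Tr_{F_r/F_2}(t_0^{r+1}) = 1; (4) in W_2(F_2), the Witt-vector trace satisfies Tr_{r²/2}(t_0, 0) = s·(1,0) + (0,1). -/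
open Finset

open scoped Classical

noncomputable section

variable {K : Type*}

/-- Constructor for length-two Witt vectors. -/
def W2.mk' {R : Type*} (a b : R) : W2 R := ((a, b) : R × R)

section MyAux

variable {R : Type*} [CommRing R] [CharP R 2]

theorem W2.mk'_fst (a b : R) : (W2.mk' a b).1 = a := rfl
theorem W2.mk'_snd (a b : R) : (W2.mk' a b).2 = b := rfl

theorem W2.frob_iterate_mk' (a : R) (i : ℕ) :
    W2.frob^[i] (W2.mk' a 0) = W2.mk' (a ^ 2 ^ i) 0 := by
  induction i with
  | zero => simp [W2.mk']; rfl
  | succ n ih =>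
      rw [Function.iterate_succ_apply', ih]
      show W2.mk' ((a ^ 2 ^ n) ^ 2) ((0:R) ^ 2) = W2.mk' (a ^ 2 ^ (n + 1)) 0
      rw [← pow_mul, ← pow_succ]
      simp [W2.mk']; rfl

theorem W2.sum_mk' (f : ℕ → R) (n : ℕ) :
    ∑ i ∈ Finset.range n, W2.mk' (f i) 0
      = W2.mk' (∑ i ∈ Finset.range n, f i)
          (∑ i ∈ Finset.range n, f i * ∑ j ∈ Finset.range i, f j) := by
  induction n with
  | zero => simp [W2.mk']; rfl
  | succ n ih =>
      rw [Finset.sum_range_succ, ih, Finset.sum_range_succ, Finset.sum_range_succ]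
      refine Prod.ext_iff.mpr ⟨?_, ?_⟩
      · rfl
      · show (∑ i ∈ Finset.range n, f i * ∑ j ∈ Finset.range i, f j) + 0
            + (∑ i ∈ Finset.range n, f i) * f n = _
        rw [W2.mk'_snd]
        ring

theorem mySumH {F : Type*} [Field F] [CharP F 2] (f : ℕ → F) (n : ℕ) :
    ∑ i ∈ Finset.range n, ((∑ j ∈ Finset.range i, f j) + (i : F) * f i)
      = ((n : F) + 1) * ∑ j ∈ Finset.range n, f j := by
  have h2 : (2 : F) = 0 := by exact_mod_cast CharP.cast_eq_zero F 2
  induction n with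
  | zero => simp
  | succ n ih =>
      rw [Finset.sum_range_succ, ih, Finset.sum_range_succ]
      push_cast
      linear_combination (-(f n)) * h2

end MyAux

/-- Properties of `t₀` with `t₀^r + t₀ = 1` (`r = 2^s`):
`t₀ ∈ 𝔽_{r²}`, `t₀^{r+1} ∈ 𝔽_r`, `Tr_{𝔽_r/𝔽_2}(t₀^{r+1}) = 1`, and the Witt-vector trace
`Tr_{r²/2}(t₀, 0) = s·(1,0) + (0,1)`. -/
theorem statement13 (s : ℕ) (hs : 1 ≤ s)
    (t0 : AlgebraicClosure (ZMod 2)) (ht0 : t0 ^ 2 ^ s + t0 = 1) :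
    t0 ^ (2 ^ s) ^ 2 = t0 ∧
    (t0 ^ (2 ^ s + 1)) ^ 2 ^ s = t0 ^ (2 ^ s + 1) ∧
    tr2 s (t0 ^ (2 ^ s + 1)) = 1 ∧
    W2.tr (2 * s) (W2.mk' t0 0)
      = s • W2.mk' (1 : AlgebraicClosure (ZMod 2)) 0
        + W2.mk' (0 : AlgebraicClosure (ZMod 2)) 1 := by
  have h2 : (2 : AlgebraicClosure (ZMod 2)) = 0 := by
    exact_mod_cast CharP.cast_eq_zero (AlgebraicClosure (ZMod 2)) 2
  have hr : t0 ^ 2 ^ s = 1 + t0 := by linear_combination ht0 - t0 * h2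
  have hkey : ∀ j, t0 ^ 2 ^ (s + j) = 1 + t0 ^ 2 ^ j := by
    intro j
    rw [pow_add, pow_mul, hr, add_pow_char_pow, one_pow]
  have h1 : t0 ^ (2 ^ s) ^ 2 = t0 := by
    have he : (2 ^ s : ℕ) ^ 2 = 2 ^ (s + s) := by rw [pow_add]; ring
    rw [he, hkey s, hr]
    linear_combination h2
  refine ⟨h1, ?_, ?_, ?_⟩
  · -- t0^(r+1) ∈ F_r
    rw [← pow_mul]
    have he : (2 ^ s + 1) * 2 ^ s = 2 ^ (s + s) + 2 ^ s := by rw [pow_add]; ring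
    rw [he, pow_add, hkey s, hr, pow_succ, hr]
    linear_combination (1 + t0) * h2
  · -- trace of t0^(r+1) is 1
    unfold tr2
    have hterm : ∀ i, (t0 ^ (2 ^ s + 1)) ^ 2 ^ i = t0 ^ 2 ^ (i + 1) - t0 ^ 2 ^ i := by
      intro i
      rw [← pow_mul]
      have he : (2 ^ s + 1) * 2 ^ i = 2 ^ (s + i) + 2 ^ i := by rw [pow_add]; ring
      have hsq : t0 ^ 2 ^ (i + 1) = t0 ^ 2 ^ i * t0 ^ 2 ^ i := by
        rw [← pow_add]; congr 1; rw [pow_succ]; ring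
      rw [he, pow_add, hkey i, hsq]
      linear_combination (t0 ^ 2 ^ i) * h2
    calc ∑ i ∈ Finset.range s, (t0 ^ (2 ^ s + 1)) ^ 2 ^ i
        = ∑ i ∈ Finset.range s, (t0 ^ 2 ^ (i + 1) - t0 ^ 2 ^ i) :=
          Finset.sum_congr rfl fun i _ => hterm i
      _ = t0 ^ 2 ^ s - t0 ^ 2 ^ 0 := Finset.sum_range_sub (fun i => t0 ^ 2 ^ i) s
      _ = 1 := by rw [hr, pow_zero, pow_one]; ring
  · -- the Witt-vector trace
    let F := AlgebraicClosure (ZMod 2)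
    set g : ℕ → F := fun i => t0 ^ 2 ^ i with hg
    set B : F := ∑ i ∈ Finset.range s, g i with hB
    set G : F := ∑ i ∈ Finset.range s, (i : F) with hG
    -- B * B + B = 1
    have hBsq : B * B = ∑ i ∈ Finset.range s, g (i + 1) := by
      have hm := map_sum (frobenius F 2) g (Finset.range s)
      simp only [frobenius_def] at hm
      have : B * B = B ^ 2 := by ring
      rw [this, hB, hm]
      refine Finset.sum_congr rfl fun i _ => ?_
      show (t0 ^ 2 ^ i) ^ 2 = t0 ^ 2 ^ (i + 1)
      rw [← pow_mul, ← pow_succ]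
    have hBB : B * B + B = 1 := by
      have htel : ∑ i ∈ Finset.range s, (g (i + 1) - g i) = g s - g 0 :=
        Finset.sum_range_sub g s
      rw [Finset.sum_sub_distrib] at htel
      have hgs : g s = 1 + t0 := hr
      have hg0 : g 0 = t0 := by simp [hg]
      rw [hgs, hg0, ← hBsq, ← hB] at htel
      linear_combination htel + B * h2
    -- LHS computation
    have hLHS : W2.tr (2 * s) (W2.mk' t0 0)
        = W2.mk' (∑ i ∈ Finset.range (2 * s), g i)
            (∑ i ∈ Finset.range (2 * s), g i * ∑ j ∈ Finset.range i, g j) := by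
      unfold W2.tr
      rw [show (∑ i ∈ Finset.range (2 * s), W2.frob^[i] (W2.mk' t0 0))
            = ∑ i ∈ Finset.range (2 * s), W2.mk' (g i) 0 from
          Finset.sum_congr rfl fun i _ => W2.frob_iterate_mk' t0 i]
      exact W2.sum_mk' g (2 * s)
    -- RHS computation
    have hRHS : s • W2.mk' (1 : F) 0 + W2.mk' (0 : F) 1 = W2.mk' ((s : F)) (G + 1) := by
      have hsm : s • W2.mk' (1 : F) 0 = ∑ _i ∈ Finset.range s, W2.mk' (1 : F) 0 := by
        rw [Finset.sum_const, Finset.card_range]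
      rw [hsm, W2.sum_mk' (fun _ => (1 : F)) s]
      have e1 : (∑ _i ∈ Finset.range s, (1 : F)) = (s : F) := by
        simp
      have e2 : (∑ i ∈ Finset.range s, (1 : F) * ∑ _j ∈ Finset.range i, (1 : F)) = G := by
        rw [hG]
        refine Finset.sum_congr rfl fun i _ => ?_
        simp
      rw [e1, e2]
      refine Prod.ext_iff.mpr ⟨?_, ?_⟩
      · show (s : F) + 0 = (s : F); ring
      · show G + 1 + (s : F) * 0 = G + 1; ring
    rw [hLHS, hRHS]
    -- key shift identities
    have hshift : ∀ i, g (s + i) = 1 + g i := fun i => hkey i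
    have hA : ∑ i ∈ Finset.range (2 * s), g i = (s : F) := by
      rw [two_mul, Finset.sum_range_add]
      have : ∑ i ∈ Finset.range s, g (s + i) = (s : F) + B := by
        calc ∑ i ∈ Finset.range s, g (s + i) = ∑ i ∈ Finset.range s, (1 + g i) :=
              Finset.sum_congr rfl fun i _ => hshift i
          _ = (s : F) + B := by rw [Finset.sum_add_distrib, hB]; simp
      rw [this, ← hB]
      linear_combination B * h2
    have hS : ∀ i, ∑ j ∈ Finset.range (s + i), g j
        = B + ((i : F) + ∑ j ∈ Finset.range i, g j) := by
      intro i
      rw [Finset.sum_range_add, ← hB]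
      congr 1
      calc ∑ j ∈ Finset.range i, g (s + j) = ∑ j ∈ Finset.range i, (1 + g j) :=
            Finset.sum_congr rfl fun j _ => hshift j
        _ = (i : F) + ∑ j ∈ Finset.range i, g j := by
            rw [Finset.sum_add_distrib]; simp
    have hE : ∑ i ∈ Finset.range (2 * s), g i * ∑ j ∈ Finset.range i, g j = G + 1 := by
      rw [two_mul, Finset.sum_range_add]
      have hpart2 : ∑ i ∈ Finset.range s, g (s + i) * ∑ j ∈ Finset.range (s + i), g j
          = ∑ i ∈ Finset.range s,
              (1 + g i) * (B + ((i : F) + ∑ j ∈ Finset.range i, g j)) := by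
        refine Finset.sum_congr rfl fun i _ => ?_
        rw [hshift i, hS i]
      rw [hpart2, ← Finset.sum_add_distrib]
      have hterm : ∑ i ∈ Finset.range s,
            (g i * ∑ j ∈ Finset.range i, g j
              + (1 + g i) * (B + ((i : F) + ∑ j ∈ Finset.range i, g j)))
          = ∑ i ∈ Finset.range s,
            (B + (i : F) + ((∑ j ∈ Finset.range i, g j) + (i : F) * g i) + g i * B) := by
        refine Finset.sum_congr rfl fun i _ => ?_
        linear_combination (g i * ∑ j ∈ Finset.range i, g j) * h2
      rw [hterm]
      rw [Finset.sum_add_distrib, Finset.sum_add_distrib, Finset.sum_add_distrib]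
      have c1 : ∑ _i ∈ Finset.range s, B = (s : F) * B := by
        rw [Finset.sum_const, Finset.card_range, nsmul_eq_mul]
      have c2 : ∑ i ∈ Finset.range s, (i : F) = G := hG.symm
      have c3 : ∑ i ∈ Finset.range s,
          ((∑ j ∈ Finset.range i, g j) + (i : F) * g i) = ((s : F) + 1) * B := by
        rw [mySumH g s]
      have c4 : ∑ i ∈ Finset.range s, g i * B = B * B := by
        rw [← Finset.sum_mul]
      rw [c1, c2, c3, c4]
      linear_combination hBB + ((s : F) * B) * h2
    rw [hA, hE]

end
end

section
/- Let p be a power of 2 and m ≥ 1 an integer. For each k ≥ 1 let N_k := |{(x,y) ∈ F_{p^k} × F_{p^k} : y^p + y = x^{p^m + 1}}|. Then N_{2m} = p^{2m} + (p−1)·p^{2m} (i.e. the curve y^p + y = x^{p^m+1} is F_{p^{2m}}-maximal), and for every k with 1 ≤ k < 2m one has (N_k − p^k)² ≠ (p−1)²·p^{2m}·p^k (i.e. the curve is not F_{p^k}-extremal); hence the F_p-period of this curve is 2m and its parity is −1. -/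
open Finset

open scoped Classical

noncomputable section

variable {K : Type*}

namespace VGVAux
open Polynomial
variable {F : Type*} [Field F] [Fintype F]

lemma card_root_set_le (P : Polynomial F) (hP : P ≠ 0) :
    (univ.filter fun y : F => P.eval y = 0).card ≤ P.natDegree := by
  classical
  refine le_trans (Finset.card_le_card ?_)
    ((Multiset.toFinset_card_le _).trans (Polynomial.card_roots' P))
  intro y hy
  simp only [Finset.mem_filter, Finset.mem_univ, true_and] at hy
  simp [Polynomial.mem_roots, hP, Polynomial.IsRoot, hy]

lemma fiber_card_le (k : ℕ) (hk : 1 ≤ k) (c : F) :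
    (univ.filter fun y : F => y ^ 2 ^ k + y = c).card ≤ 2 ^ k := by
  classical
  set P : Polynomial F := X ^ 2 ^ k + (X - C c) with hPdef
  have h2 : (1 : WithBot ℕ) < (2 ^ k : ℕ) := by
    exact_mod_cast Nat.one_lt_two_pow (by omega)
  have hdeg : P.degree = (2 ^ k : ℕ) := by
    rw [hPdef, Polynomial.degree_add_eq_left_of_degree_lt, Polynomial.degree_X_pow]
    rw [Polynomial.degree_X_pow]
    exact lt_of_le_of_lt (Polynomial.degree_X_sub_C c ▸ le_refl _) h2
  have hne : P ≠ 0 := by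
    intro h
    rw [h, Polynomial.degree_zero] at hdeg
    exact absurd hdeg.symm (by exact_mod_cast WithBot.coe_ne_bot)
  have hnat : P.natDegree = 2 ^ k := Polynomial.natDegree_eq_of_degree_eq_some hdeg
  calc (univ.filter fun y : F => y ^ 2 ^ k + y = c).card
      = (univ.filter fun y : F => P.eval y = 0).card := by
        congr 1; apply Finset.filter_congr; intro y _
        simp only [hPdef, eval_add, eval_pow, eval_X, eval_sub, eval_C, eq_iff_iff]
        constructor <;> intro h <;> linear_combination h
    _ ≤ P.natDegree := card_root_set_le P hne
    _ = 2 ^ k := hnat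

lemma trpoly_card_le (q n : ℕ) (hq : 2 ≤ q) (hn : 1 ≤ n) :
    (univ.filter fun z : F => ∑ i ∈ range n, z ^ q ^ i = 0).card ≤ q ^ (n - 1) := by
  classical
  obtain ⟨n', rfl⟩ : ∃ n', n = n' + 1 := ⟨n - 1, by omega⟩
  simp only [Nat.add_sub_cancel]
  set Q : Polynomial F := ∑ i ∈ range (n' + 1), X ^ q ^ i with hQdef
  have h1 : (∑ i ∈ range n', (X : Polynomial F) ^ q ^ i).degree
      < ((q ^ n' : ℕ) : WithBot ℕ) := by
    refine lt_of_le_of_lt (Polynomial.degree_sum_le _ _) ?_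
    rw [Finset.sup_lt_iff (by exact_mod_cast WithBot.bot_lt_coe (q ^ n'))]
    intro i hi
    rw [Polynomial.degree_X_pow]
    exact_mod_cast Nat.pow_lt_pow_right hq (Finset.mem_range.mp hi)
  have hdeg : Q.degree = ((q ^ n' : ℕ) : WithBot ℕ) := by
    rw [hQdef, Finset.sum_range_succ,
      Polynomial.degree_add_eq_right_of_degree_lt (by rw [Polynomial.degree_X_pow]; exact h1),
      Polynomial.degree_X_pow]
  have hne : Q ≠ 0 := by
    intro h
    rw [h, Polynomial.degree_zero] at hdeg
    exact absurd hdeg.symm (by exact_mod_cast WithBot.coe_ne_bot)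
  have hnat : Q.natDegree = q ^ n' := Polynomial.natDegree_eq_of_degree_eq_some hdeg
  calc (univ.filter fun z : F => ∑ i ∈ range (n' + 1), z ^ q ^ i = 0).card
      = (univ.filter fun z : F => Q.eval z = 0).card := by
        congr 1; apply Finset.filter_congr; intro z _
        simp [hQdef, Polynomial.eval_finset_sum]
    _ ≤ Q.natDegree := card_root_set_le Q hne
    _ = q ^ n' := hnat

lemma fiber_card_eq (k : ℕ) [CharP F 2] (c : F) (hc : ∃ y0 : F, y0 ^ 2 ^ k + y0 = c) :
    (univ.filter fun y : F => y ^ 2 ^ k + y = c).card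
      = (univ.filter fun y : F => y ^ 2 ^ k + y = 0).card := by
  classical
  obtain ⟨y0, hy0⟩ := hc
  have h2 : (2 : F) = 0 := by exact_mod_cast CharP.cast_eq_zero F 2
  haveI : Fact (Nat.Prime 2) := ⟨Nat.prime_two⟩
  apply Finset.card_bij' (fun y _ => y + y0) (fun y _ => y + y0)
  · intro y hy
    simp only [mem_filter, mem_univ, true_and] at *
    rw [add_pow_char_pow]
    linear_combination hy + hy0 + c * h2
  · intro y hy
    simp only [mem_filter, mem_univ, true_and] at *
    rw [add_pow_char_pow]
    linear_combination hy + hy0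
  · intro y _; linear_combination y0 * h2
  · intro y _; linear_combination y0 * h2

lemma main_fiber_count (k m : ℕ) [CharP F 2] (hk : 1 ≤ k) (hm : 1 ≤ m)
    (hcard : Fintype.card F = 2 ^ (k * (2 * m))) (x : F) :
    (univ.filter fun y : F => y ^ 2 ^ k + y = x ^ ((2 ^ k) ^ m + 1)).card = 2 ^ k := by
  classical
  haveI : Fact (Nat.Prime 2) := ⟨Nat.prime_two⟩
  have h2 : (2 : F) = 0 := by exact_mod_cast CharP.cast_eq_zero F 2
  set q := 2 ^ k with hq
  set n := 2 * m with hn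
  have hqe : ∀ i : ℕ, q ^ i = 2 ^ (k * i) := fun i => by rw [hq, ← pow_mul]
  have hpow : ∀ z : F, z ^ q ^ n = z := by
    intro z
    rw [hqe n, ← hcard]
    exact FiniteField.pow_card z
  set τ : F → F := fun z => ∑ i ∈ range n, z ^ q ^ i with hτ
  have htau_phi : ∀ y : F, τ (y ^ q + y) = 0 := by
    intro y
    have hfrob : ∀ (a b : F) (i : ℕ), (a + b) ^ q ^ i = a ^ q ^ i + b ^ q ^ i := by
      intro a b i
      rw [hqe i, add_pow_char_pow]
    have hstep : ∀ i : ℕ, (y ^ q) ^ q ^ i = y ^ q ^ (i + 1) := by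
      intro i; rw [← pow_mul, ← pow_succ']
    rw [hτ]
    simp only [hfrob, hstep]
    rw [Finset.sum_add_distrib]
    have E1 := Finset.sum_range_succ' (fun i => y ^ q ^ i) n
    have E2 := Finset.sum_range_succ (fun i => y ^ q ^ i) n
    have E3 : y ^ q ^ n = y := hpow y
    simp only [pow_zero, pow_one] at E1
    linear_combination -E1 - E2 - E3 + (∑ i ∈ range (n + 1), y ^ q ^ i - y) * h2
  have hker_le : (univ.filter fun y : F => y ^ q + y = 0).card ≤ q := fiber_card_le k hk 0
  have hq2 : 2 ≤ q := by rw [hq]; exact Nat.one_lt_two_pow (by omega)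
  have hZ_le : (univ.filter fun z : F => τ z = 0).card ≤ q ^ (n - 1) :=
    trpoly_card_le q n hq2 (by omega)
  set Φ : F → F := fun y => y ^ q + y with hΦ
  have hsubset : univ.image Φ ⊆ univ.filter fun z : F => τ z = 0 := by
    intro z hz
    simp only [Finset.mem_image, mem_univ, true_and] at hz
    obtain ⟨y, rfl⟩ := hz
    simp only [mem_filter, mem_univ, true_and]
    exact htau_phi y
  have hcardsum : Fintype.card F = ∑ c ∈ univ.image Φ, (univ.filter fun y => Φ y = c).card := by
    rw [← Finset.card_univ]
    exact Finset.card_eq_sum_card_fiberwise (fun y _ => Finset.mem_image_of_mem Φ (mem_univ y))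
  have hfib_eq : ∀ c ∈ univ.image Φ,
      (univ.filter fun y => Φ y = c).card = (univ.filter fun y : F => y ^ q + y = 0).card := by
    intro c hc
    simp only [Finset.mem_image, mem_univ, true_and] at hc
    exact fiber_card_eq k c hc
  have hcount : Fintype.card F
      = (univ.image Φ).card * (univ.filter fun y : F => y ^ q + y = 0).card := by
    rw [hcardsum, Finset.sum_congr rfl hfib_eq, Finset.sum_const, smul_eq_mul]
  set A := (univ.filter fun y : F => y ^ q + y = 0).card with hA
  set r := (univ.image Φ).card with hr
  set Z := (univ.filter fun z : F => τ z = 0).card with hZ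
  have hrZ : r ≤ Z := Finset.card_le_card hsubset
  have hKcard : Fintype.card F = q ^ n := by rw [hcard, hqe n]
  have hrA : r * A = q ^ n := by rw [← hcount, hKcard]
  have hr_ge : q ^ (n - 1) ≤ r := by
    have h1 : q ^ n = q ^ (n - 1) * q := by
      rw [← pow_succ]; congr 1; omega
    have h2' : r * A ≤ r * q := Nat.mul_le_mul_left r hker_le
    rw [hrA, h1] at h2'
    exact Nat.le_of_mul_le_mul_right h2' (by omega)
  have hrZeq : r = Z := le_antisymm hrZ (le_trans hZ_le hr_ge)
  have himage_eq : univ.image Φ = univ.filter fun z : F => τ z = 0 :=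
    Finset.eq_of_subset_of_card_le hsubset (by omega)
  have hA_eq : A = q := by
    have hr_eq : r = q ^ (n - 1) := le_antisymm (le_trans hrZ hZ_le) hr_ge
    have h1 : q ^ n = q ^ (n - 1) * q := by
      rw [← pow_succ]; congr 1; omega
    rw [hr_eq, h1] at hrA
    exact Nat.eq_of_mul_eq_mul_left (by positivity) hrA
  have hc_tau : τ (x ^ (q ^ m + 1)) = 0 := by
    set c := x ^ (q ^ m + 1) with hcdef
    have hcq : c ^ q ^ m = c := by
      rw [hcdef, ← pow_mul]
      have he : (q ^ m + 1) * q ^ m = q ^ n + q ^ m := by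
        rw [hn, two_mul, pow_add]; ring
      rw [he, pow_add, hpow x, pow_add, pow_one, mul_comm]
    rw [hτ]
    simp only
    rw [hn, two_mul, Finset.sum_range_add]
    have hshift : ∀ i, c ^ q ^ (m + i) = c ^ q ^ i := by
      intro i; rw [pow_add, pow_mul, hcq]
    simp only [hshift]
    linear_combination (∑ i ∈ range m, c ^ q ^ i) * h2
  have hc_mem : x ^ (q ^ m + 1) ∈ univ.image Φ := by
    rw [himage_eq]
    simp only [mem_filter, mem_univ, true_and]
    exact hc_tau
  rw [Finset.mem_image] at hc_mem
  obtain ⟨y0, -, hy0⟩ := hc_mem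
  rw [fiber_card_eq k _ ⟨y0, hy0⟩]
  exact hA_eq


def prodSubtypeEquivSigma {α β : Type*} (p : α → β → Prop) :
    {z : α × β // p z.1 z.2} ≃ Σ a : α, {b : β // p a b} where
  toFun z := ⟨z.1.1, z.1.2, z.2⟩
  invFun s := ⟨(s.1, s.2.1), s.2.2⟩
  left_inv z := rfl
  right_inv s := rfl


end VGVAux

/-- The curve `y^p + y = x^{p^m+1}` is `𝔽_{p^{2m}}`-maximal and is not
`𝔽_{p^t}`-extremal for `t < 2m`: its `𝔽_p`-period is `2m` and its parity is `-1`. -/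
theorem statement15 (k m : ℕ) (hk : 1 ≤ k) (hm : 1 ≤ m) :
    (Nat.card {z : GaloisField 2 (k * (2 * m)) × GaloisField 2 (k * (2 * m)) //
        z.2 ^ 2 ^ k + z.2 = z.1 ^ ((2 ^ k) ^ m + 1)} : ℤ)
      = 2 ^ (k * (2 * m)) + (2 ^ k - 1) * 2 ^ (k * (2 * m)) ∧
    ∀ t : ℕ, 1 ≤ t → t < 2 * m →
      ((Nat.card {z : GaloisField 2 (k * t) × GaloisField 2 (k * t) //
          z.2 ^ 2 ^ k + z.2 = z.1 ^ ((2 ^ k) ^ m + 1)} : ℤ) - 2 ^ (k * t)) ^ 2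
        ≠ (2 ^ k - 1) ^ 2 * (2 ^ k) ^ (2 * m) * 2 ^ (k * t) := by
  refine ⟨?_, ?_⟩
  · set K := GaloisField 2 (k * (2 * m)) with hK
    haveI : Fintype K := Fintype.ofFinite K
    have hcard : Fintype.card K = 2 ^ (k * (2 * m)) := by
      rw [← Nat.card_eq_fintype_card, hK]
      exact GaloisField.card 2 _ (by positivity)
    have hN : Nat.card {z : K × K // z.2 ^ 2 ^ k + z.2 = z.1 ^ ((2 ^ k) ^ m + 1)}
        = 2 ^ (k * (2 * m)) * 2 ^ k := by
      rw [Nat.card_eq_fintype_card,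
        Fintype.card_congr (VGVAux.prodSubtypeEquivSigma fun a b : K => b ^ 2 ^ k + b = a ^ ((2 ^ k) ^ m + 1)),
        Fintype.card_sigma]
      have : ∀ a : K, Fintype.card {b : K // b ^ 2 ^ k + b = a ^ ((2 ^ k) ^ m + 1)} = 2 ^ k := by
        intro a
        rw [Fintype.card_subtype]
        exact VGVAux.main_fiber_count k m hk hm hcard a
      rw [Finset.sum_congr rfl fun a _ => this a, Finset.sum_const, Finset.card_univ, hcard,
        smul_eq_mul]
    rw [hN]
    push_cast
    ring
  · intro t ht htm
    set K := GaloisField 2 (k * t) with hK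
    haveI : Fintype K := Fintype.ofFinite K
    have hcard : Fintype.card K = 2 ^ (k * t) := by
      rw [← Nat.card_eq_fintype_card, hK]
      exact GaloisField.card 2 _ (by positivity)
    have hub : Nat.card {z : K × K // z.2 ^ 2 ^ k + z.2 = z.1 ^ ((2 ^ k) ^ m + 1)}
        ≤ 2 ^ (k * t) * 2 ^ k := by
      rw [Nat.card_eq_fintype_card,
        Fintype.card_congr (VGVAux.prodSubtypeEquivSigma fun a b : K => b ^ 2 ^ k + b = a ^ ((2 ^ k) ^ m + 1)),
        Fintype.card_sigma]
      calc ∑ a : K, Fintype.card {b : K // b ^ 2 ^ k + b = a ^ ((2 ^ k) ^ m + 1)}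
          ≤ ∑ _a : K, 2 ^ k := Finset.sum_le_sum fun a _ => by
            rw [Fintype.card_subtype]; exact VGVAux.fiber_card_le k hk _
        _ = 2 ^ (k * t) * 2 ^ k := by
            rw [Finset.sum_const, Finset.card_univ, hcard, smul_eq_mul]
    intro heq
    set N : ℤ := (Nat.card {z : K × K // z.2 ^ 2 ^ k + z.2 = z.1 ^ ((2 ^ k) ^ m + 1)} : ℤ) with hNdef
    set A : ℤ := 2 ^ (k * t) with hAdef
    set Q : ℤ := 2 ^ k with hQdef
    have hN0 : 0 ≤ N := by rw [hNdef]; positivity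
    have hNle : N ≤ A * Q := by
      rw [hNdef, hAdef, hQdef]; exact_mod_cast hub
    have hA0 : (0 : ℤ) < A := by rw [hAdef]; positivity
    have hQ2 : (2 : ℤ) ≤ Q := by
      rw [hQdef]
      calc (2 : ℤ) = 2 ^ 1 := (pow_one 2).symm
        _ ≤ 2 ^ k := pow_le_pow_right₀ (by norm_num) hk
    have hsq : (N - A) ^ 2 ≤ ((Q - 1) * A) ^ 2 := by
      apply sq_le_sq'
      · nlinarith
      · nlinarith
    have hAB : A < (2 : ℤ) ^ (k * (2 * m)) := by
      rw [hAdef]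
      exact pow_lt_pow_right₀ (by norm_num) (by exact Nat.mul_lt_mul_of_le_of_lt (le_refl k) htm (by omega))
    have hQpow : Q ^ (2 * m) = (2 : ℤ) ^ (k * (2 * m)) := by rw [hQdef, ← pow_mul]
    have hQ1 : (0 : ℤ) < (Q - 1) ^ 2 := by nlinarith
    have h1 : (Q - 1) ^ 2 * A * A < (Q - 1) ^ 2 * A * (2 : ℤ) ^ (k * (2 * m)) :=
      mul_lt_mul_of_pos_left hAB (mul_pos hQ1 hA0)
    have hkey : ((Q - 1) * A) ^ 2 < (Q - 1) ^ 2 * (2 : ℤ) ^ (k * (2 * m)) * A := by nlinarith [h1]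
    rw [heq] at hsq
    rw [hQpow] at hsq
    linarith [hkey, hsq]

end
end

section
/- Let p be a power of 2 and m ≥ 4 an even integer. Set R(x) := ∑_{i=1}^{m/2} x^{p^{2i−1}} ∈ F_p[x] (of degree p^{m−1}), and for each k ≥ 1 let N_k := |{(x,y) ∈ F_{p^k} × F_{p^k} : y^p + y = x·R(x)}|. Then N_{2m} = p^{2m} − (p−1)·p^{2m−1} (i.e. the curve C_R is F_{p^{2m}}-minimal), and for every k with 1 ≤ k < 2m one has (N_k − p^k)² ≠ (p−1)²·p^{2(m−1)}·p^k (i.e. C_R is not F_{p^k}-extremal); hence the F_p-period of C_R is 2m and its parity is +1. -/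
open Finset

open scoped Classical

noncomputable section

variable {K : Type*}

set_option linter.unusedSectionVars false
set_option linter.unusedVariables false
open Polynomial
section VdG
variable {K : Type*} [Field K] [Fintype K] [CharP K 2]

lemma frob_add (j : ℕ) (x y : K) : (x + y) ^ (2:ℕ) ^ j = x ^ (2:ℕ)^j + y ^ (2:ℕ)^j :=
  add_pow_char_pow x y 2 j

def PS (s : Finset ℕ) (x : K) : K := ∑ j ∈ s, x ^ (2:ℕ) ^ j

lemma PS_add (s : Finset ℕ) (x y : K) : PS s (x+y) = PS s x + PS s y := by
  unfold PS; rw [← Finset.sum_add_distrib]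
  exact Finset.sum_congr rfl fun j _ => frob_add j x y

lemma PS_zero_card_le (s : Finset ℕ) (hs : s.Nonempty) {D : ℕ} (hD : ∀ j ∈ s, j ≤ D) :
    (univ.filter fun x : K => PS s x = 0).card ≤ 2 ^ D := by
  classical
  set P : Polynomial K := ∑ j ∈ s, X ^ (2^j) with hP
  obtain ⟨j0, hj0⟩ := hs
  have hPne : P ≠ 0 := by
    intro h
    have h1 : P.coeff (2 ^ j0) = 1 := by
      rw [hP, finset_sum_coeff]
      have he : ∀ j ∈ s, (X ^ (2^j) : Polynomial K).coeff (2^j0) = if j0 = j then 1 else 0 := by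
        intro j hj
        rw [coeff_X_pow]
        congr 1
        simp [eq_comm, (Nat.pow_right_injective (le_refl 2)).eq_iff]
      rw [Finset.sum_congr rfl he, Finset.sum_ite_eq s j0 (fun _ => 1), if_pos hj0]
    rw [h] at h1; simp at h1
  have heval : ∀ x : K, P.eval x = PS s x := fun x => by
    rw [hP, eval_finset_sum]; simp [PS]
  have hsub : (univ.filter fun x : K => PS s x = 0) ⊆ P.roots.toFinset := by
    intro x hx
    rw [mem_filter] at hx
    rw [Multiset.mem_toFinset, mem_roots hPne]
    show P.eval x = 0
    rw [heval]; exact hx.2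
  calc (univ.filter fun x : K => PS s x = 0).card
      ≤ P.roots.toFinset.card := card_le_card hsub
    _ ≤ Multiset.card P.roots := Multiset.toFinset_card_le _
    _ ≤ P.natDegree := P.card_roots'
    _ ≤ 2^D := natDegree_sum_le_of_forall_le s _ fun j hj => by
        rw [natDegree_X_pow]; exact Nat.pow_le_pow_right (by norm_num) (hD j hj)

lemma card_fiber_eq (f : K →+ K) (c : K) (hc : ∃ y, f y = c) :
    (univ.filter fun y => f y = c).card = (univ.filter fun y => f y = 0).card := by
  obtain ⟨y0, hy0⟩ := hc
  apply Finset.card_bij' (fun y _ => y + y0) (fun y _ => y + y0)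
  · intro a ha
    rw [mem_filter] at ha ⊢
    refine ⟨mem_univ _, ?_⟩
    rw [map_add, ha.2, hy0, CharTwo.add_self_eq_zero]
  · intro a ha
    rw [mem_filter] at ha ⊢
    refine ⟨mem_univ _, ?_⟩
    rw [map_add, ha.2, hy0, zero_add]
  · intro a _; rw [add_assoc, CharTwo.add_self_eq_zero, add_zero]
  · intro a _; rw [add_assoc, CharTwo.add_self_eq_zero, add_zero]

lemma card_ker_mul_card_image (f : K →+ K) :
    (univ.filter fun y => f y = 0).card * (univ.image f).card = Fintype.card K := by
  have h := Finset.card_eq_sum_card_fiberwise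
    (s := (univ : Finset K)) (t := univ.image f) (f := f)
    (fun x _ => mem_image_of_mem _ (mem_univ x))
  rw [card_univ] at h
  rw [h]
  rw [Finset.sum_congr rfl (fun c hc => by
    obtain ⟨y, _, hy⟩ := Finset.mem_image.mp hc
    exact card_fiber_eq f c ⟨y, hy⟩)]
  rw [Finset.sum_const, smul_eq_mul, mul_comm]
lemma nat_eq_of_le_of_mul_eq {a b A B : ℕ} (hA : 0 < A) (hB : 0 < B)
    (ha : a ≤ A) (hb : b ≤ B) (h : a * b = A * B) : a = A ∧ b = B := by
  constructor
  · nlinarith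
  · nlinarith

lemma sandwich (f g : K →+ K) (A B : ℕ) (hA : 0 < A) (hB : 0 < B)
    (hcard : Fintype.card K = A * B)
    (hfg : ∀ y, g (f y) = 0)
    (hkf : (univ.filter fun y => f y = 0).card ≤ A)
    (hkg : (univ.filter fun x => g x = 0).card ≤ B) :
    (univ.filter fun y => f y = 0).card = A ∧
    (univ.filter fun x => g x = 0).card = B ∧
    (∀ c, g c = 0 ↔ ∃ y, f y = c) := by
  have him : univ.image f ⊆ univ.filter (fun x => g x = 0) := by
    intro c hc
    obtain ⟨y, _, hy⟩ := Finset.mem_image.mp hc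
    exact mem_filter.mpr ⟨mem_univ _, hy ▸ hfg y⟩
  have h1 : (univ.image f).card ≤ B := le_trans (card_le_card him) hkg
  have hmul := card_ker_mul_card_image f
  rw [hcard] at hmul
  obtain ⟨hkA, hiB⟩ := nat_eq_of_le_of_mul_eq hA hB hkf h1 hmul
  have heq : univ.image f = univ.filter (fun x => g x = 0) :=
    Finset.eq_of_subset_of_card_le him (by rw [hiB]; exact hkg)
  refine ⟨hkA, by rw [← heq, hiB], fun c => ?_⟩
  constructor
  · intro hc
    have : c ∈ univ.image f := heq ▸ mem_filter.mpr ⟨mem_univ _, hc⟩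
    obtain ⟨y, _, hy⟩ := Finset.mem_image.mp this
    exact ⟨y, hy⟩
  · rintro ⟨y, rfl⟩; exact hfg y

lemma sum_cancel (F : Finset K) (χ : K → ℤ) (d : K)
    (hd : ∀ x, x ∈ F ↔ x + d ∈ F)
    (hχ : ∀ x ∈ F, χ (x + d) = - χ x) : ∑ x ∈ F, χ x = 0 := by
  have h1 : ∑ x ∈ F, χ x = ∑ x ∈ F, χ (x + d) := by
    apply Finset.sum_nbij' (fun x => x + d) (fun x => x + d)
    · intro a ha; exact (hd a).mp ha
    · intro a ha
      have := (hd (a + d)).mpr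
      rw [add_assoc, CharTwo.add_self_eq_zero, add_zero] at this
      exact this ha
    · intro a _; rw [add_assoc, CharTwo.add_self_eq_zero, add_zero]
    · intro a _; rw [add_assoc, CharTwo.add_self_eq_zero, add_zero]
    · intro a ha
      congr 1
      rw [add_assoc, CharTwo.add_self_eq_zero, add_zero]
  have h2 : ∑ x ∈ F, χ (x + d) = - ∑ x ∈ F, χ x := by
    rw [← Finset.sum_neg_distrib]
    exact Finset.sum_congr rfl hχ
  omega

lemma sum_even_odd {β : Type*} [AddCommMonoid β] (h : ℕ → β) (n : ℕ) :
    ∑ l ∈ range (2*n), h l = ∑ a ∈ range n, h (2*a) + ∑ a ∈ range n, h (2*a+1) := by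
  induction n with
  | zero => simp
  | succ n ih =>
    have h2 : 2*(n+1) = (2*n+1)+1 := by ring
    rw [h2, Finset.sum_range_succ, Finset.sum_range_succ, ih,
      Finset.sum_range_succ (fun a => h (2*a)), Finset.sum_range_succ (fun a => h (2*a+1))]
    abel

lemma sum_mod_shift {β : Type*} [AddCommMonoid β] (n c : ℕ) (hn : 0 < n) (F : ℕ → β) :
    ∑ b ∈ range n, F b = ∑ b ∈ range n, F ((b + c) % n) := by
  set r := c % n with hr
  have hrn : r < n := Nat.mod_lt _ hn
  apply Finset.sum_nbij' (fun b => (b + (n - r)) % n) (fun b => (b + c) % n)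
  · intro a _; exact mem_range.mpr (Nat.mod_lt _ hn)
  · intro a _; exact mem_range.mpr (Nat.mod_lt _ hn)
  · -- left inverse : ((a + (n-r)) % n + c) % n = a
    intro a ha
    rw [mem_range] at ha
    rw [Nat.mod_add_mod]
    obtain ⟨q, hq⟩ : ∃ q, c = n * q + r := ⟨c / n, by rw [hr]; exact (Nat.div_add_mod c n).symm⟩
    have h3 : a + (n - r) + c = (a + n) + n * q := by
      rw [hq]; have : r ≤ n := le_of_lt hrn; omega
    rw [h3, Nat.add_mul_mod_self_left, Nat.add_mod_right, Nat.mod_eq_of_lt ha]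
  · -- right inverse : ((a + c) % n + (n - r)) % n = a
    intro a ha
    rw [mem_range] at ha
    rw [Nat.mod_add_mod]
    obtain ⟨q, hq⟩ : ∃ q, c = n * q + r := ⟨c / n, by rw [hr]; exact (Nat.div_add_mod c n).symm⟩
    have h3 : a + c + (n - r) = (a + n) + n * q := by
      rw [hq]; have : r ≤ n := le_of_lt hrn; omega
    rw [h3, Nat.add_mul_mod_self_left, Nat.add_mod_right, Nat.mod_eq_of_lt ha]
  · -- value : F a = F (((a + (n-r)) % n + c) % n)
    intro a ha
    rw [mem_range] at ha
    rw [Nat.mod_add_mod]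
    congr 1
    obtain ⟨q, hq⟩ : ∃ q, c = n * q + r := ⟨c / n, by rw [hr]; exact (Nat.div_add_mod c n).symm⟩
    have h3 : a + (n - r) + c = (a + n) + n * q := by
      rw [hq]; have : r ≤ n := le_of_lt hrn; omega
    rw [h3, Nat.add_mul_mod_self_left, Nat.add_mod_right, Nat.mod_eq_of_lt ha]
lemma frob_sum {ι : Type*} (s : Finset ι) (f : ι → K) (j : ℕ) :
    (∑ i ∈ s, f i) ^ (2:ℕ)^j = ∑ i ∈ s, f i ^ (2:ℕ)^j := by
  calc (∑ i ∈ s, f i) ^ (2:ℕ)^j = iterateFrobenius K 2 j (∑ i ∈ s, f i) :=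
        (iterateFrobenius_def 2 j _).symm
    _ = ∑ i ∈ s, iterateFrobenius K 2 j (f i) := map_sum _ f s
    _ = ∑ i ∈ s, f i ^ (2:ℕ)^j := Finset.sum_congr rfl fun i _ => iterateFrobenius_def 2 j (f i)

lemma pow_pow_eq (x : K) (a b : ℕ) : (x ^ (2:ℕ)^a) ^ (2:ℕ)^b = x ^ (2:ℕ)^(a+b) := by
  rw [← pow_mul, ← pow_add]

/-- relative trace to the subfield of size 2^k -/
def tau (k t : ℕ) (x : K) : K := ∑ i ∈ range t, x ^ (2:ℕ)^(k*i)

def T2n (n : ℕ) (x : K) : K := PS (range n) x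

def psi (n : ℕ) (x : K) : ℤ := if T2n n x = 0 then 1 else -1

variable {k t : ℕ}

lemma pow_card_self (hcard : Fintype.card K = 2^(k*t)) (x : K) : x ^ (2:ℕ)^(k*t) = x := by
  rw [← hcard]; exact FiniteField.pow_card x

lemma tau_add (x y : K) : tau k t (x+y) = tau k t x + tau k t y := by
  unfold tau; rw [← Finset.sum_add_distrib]
  exact Finset.sum_congr rfl fun j _ => frob_add _ x y

lemma tau_eq_PS (hk : 0 < k) (x : K) :
    tau k t x = PS ((range t).image (fun i => k*i)) x := by
  unfold PS
  rw [Finset.sum_image (fun a _ b _ h => Nat.eq_of_mul_eq_mul_left hk h)]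
  rfl

lemma tau_frob (hcard : Fintype.card K = 2^(k*t)) (x : K) :
    tau k t (x ^ (2:ℕ)^k) = tau k t x := by
  unfold tau
  have h1 : ∀ i, (x ^ (2:ℕ)^k) ^ (2:ℕ)^(k*i) = x ^ (2:ℕ)^(k*(i+1)) := by
    intro i; rw [pow_pow_eq]; congr 1; ring
  rw [Finset.sum_congr rfl fun i _ => h1 i]
  have h2 := Finset.sum_range_succ' (fun i => x ^ (2:ℕ)^(k*i)) t
  have h3 := Finset.sum_range_succ (fun i => x ^ (2:ℕ)^(k*i)) t
  have h4 : x ^ (2:ℕ)^(k*t) = x ^ (2:ℕ)^(k*0) := by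
    rw [pow_card_self hcard, Nat.mul_zero, pow_zero, pow_one]
  rw [h4] at h3
  exact add_right_cancel (h2.symm.trans h3)

lemma tau_pow (hcard : Fintype.card K = 2^(k*t)) (a : ℕ) (x : K) :
    tau k t (x ^ (2:ℕ)^(k*a)) = tau k t x := by
  induction a with
  | zero => norm_num
  | succ a ih =>
    have h : x ^ (2:ℕ)^(k*(a+1)) = (x ^ (2:ℕ)^(k*a)) ^ (2:ℕ)^k := by
      rw [pow_pow_eq, show k*a+k = k*(a+1) from by ring]
    rw [h, tau_frob hcard, ih]

lemma frob_tau (hcard : Fintype.card K = 2^(k*t)) (x : K) :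
    (tau k t x) ^ (2:ℕ)^k = tau k t x := by
  unfold tau
  rw [frob_sum]
  have h1 : ∀ i, (x ^ (2:ℕ)^(k*i)) ^ (2:ℕ)^k = (x ^ (2:ℕ)^k) ^ (2:ℕ)^(k*i) := by
    intro i; rw [pow_pow_eq, pow_pow_eq, Nat.add_comm]
  rw [Finset.sum_congr rfl fun i _ => h1 i]
  exact tau_frob hcard x

lemma Tpow {μ : K} (hμ : μ ^ (2:ℕ)^k = μ) (a : ℕ) : μ ^ (2:ℕ)^(k*a) = μ := by
  induction a with
  | zero => norm_num
  | succ a ih =>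
    have h : μ ^ (2:ℕ)^(k*(a+1)) = (μ ^ (2:ℕ)^(k*a)) ^ (2:ℕ)^k := by
      rw [pow_pow_eq, show k*a+k = k*(a+1) from by ring]
    rw [h, ih, hμ]

lemma T2n_sq (hcard : Fintype.card K = 2^(k*t)) (x : K) :
    (T2n (k*t) x) ^ 2 = T2n (k*t) x := by
  unfold T2n PS
  have h0 : ∀ y : K, y ^ 2 = y ^ (2:ℕ)^1 := by intro y; norm_num
  have h : (∑ j ∈ range (k*t), x ^ (2:ℕ)^j) ^ 2 = ∑ j ∈ range (k*t), x ^ (2:ℕ)^(j+1) := by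
    rw [h0, frob_sum]
    exact Finset.sum_congr rfl fun j _ => pow_pow_eq x j 1
  rw [h]
  have h2 := Finset.sum_range_succ' (fun j => x ^ (2:ℕ)^j) (k*t)
  have h3 := Finset.sum_range_succ (fun j => x ^ (2:ℕ)^j) (k*t)
  have h4 : x ^ (2:ℕ)^(k*t) = x ^ (2:ℕ)^0 := by
    rw [pow_card_self hcard, pow_zero, pow_one]
  rw [h4] at h3
  exact add_right_cancel (h2.symm.trans h3)

lemma T2n_mem (hcard : Fintype.card K = 2^(k*t)) (x : K) :
    T2n (k*t) x = 0 ∨ T2n (k*t) x = 1 := by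
  have hsq := T2n_sq hcard x
  have h : T2n (k*t) x * (T2n (k*t) x - 1) = 0 := by linear_combination hsq
  rcases mul_eq_zero.mp h with h | h
  · exact Or.inl h
  · right; exact sub_eq_zero.mp h

lemma T2n_add (n' : ℕ) (x y : K) : T2n n' (x+y) = T2n n' x + T2n n' y := PS_add _ x y

lemma psi_add (hcard : Fintype.card K = 2^(k*t)) (x y : K) :
    psi (k*t) (x + y) = psi (k*t) x * psi (k*t) y := by
  unfold psi
  rw [T2n_add]
  rcases T2n_mem hcard x with h1 | h1 <;> rcases T2n_mem hcard y with h2 | h2 <;>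
    simp [h1, h2, CharTwo.add_self_eq_zero (1:K)]

lemma psi_zero : psi n' (0:K) = 1 := by
  unfold psi T2n PS; simp

lemma psi_vals (n' : ℕ) (x : K) : psi n' x = 1 ∨ psi n' x = -1 := by
  unfold psi; by_cases h : T2n n' x = 0 <;> simp [h]

lemma exists_T2n_ne (hk : 0 < k) (ht : 0 < t) (hcard : Fintype.card K = 2^(k*t)) :
    ∃ z : K, T2n (k*t) z ≠ 0 := by
  by_contra h
  push_neg at h
  have he : (univ.filter fun x : K => PS (range (k*t)) x = 0) = univ := by
    apply Finset.filter_true_of_mem; intro x _; exact h x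
  have hkt : 0 < k*t := by positivity
  have hb := PS_zero_card_le (K := K) (range (k*t)) ⟨0, mem_range.mpr hkt⟩
    (D := k*t-1) (fun j hj => by rw [mem_range] at hj; omega)
  rw [he, card_univ, hcard] at hb
  have h5 : k*t-1 < k*t := by omega
  have := Nat.pow_lt_pow_right (a := 2) (by norm_num) h5
  omega

lemma exists_tau_ne (hk : 0 < k) (ht : 0 < t) (hcard : Fintype.card K = 2^(k*t)) :
    ∃ z : K, tau k t z ≠ 0 := by
  by_contra h
  push_neg at h
  have he : (univ.filter fun x : K => PS ((range t).image (fun i => k*i)) x = 0) = univ := by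
    apply Finset.filter_true_of_mem; intro x _
    rw [← tau_eq_PS hk]; exact h x
  have hb := PS_zero_card_le (K := K) ((range t).image (fun i => k*i))
    ⟨0, Finset.mem_image.mpr ⟨0, mem_range.mpr ht, by norm_num⟩⟩
    (D := k*(t-1)) (fun j hj => by
      obtain ⟨i, hi, rfl⟩ := Finset.mem_image.mp hj
      rw [mem_range] at hi
      exact Nat.mul_le_mul_left k (by omega))
  rw [he, card_univ, hcard] at hb
  have hlt : k*(t-1) < k*t := (Nat.mul_lt_mul_left hk).mpr (by omega)
  have := Nat.pow_lt_pow_right (a := 2) (by norm_num) hlt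
  omega

def phiHom (k : ℕ) : K →+ K := AddMonoidHom.mk' (fun y => y ^ (2:ℕ)^k + y)
  (by
    intro a b
    show (a+b)^(2:ℕ)^k + (a+b) = (a^(2:ℕ)^k + a) + (b^(2:ℕ)^k + b)
    rw [frob_add]; ring)

def tauHom (k t : ℕ) : K →+ K := AddMonoidHom.mk' (tau k t) tau_add

lemma phi_tau (hk : 0 < k) (ht : 0 < t) (hcard : Fintype.card K = 2^(k*t)) :
    ((univ.filter fun y : K => y ^ (2:ℕ)^k + y = 0).card = 2^k)
  ∧ (∀ c : K, tau k t c = 0 ↔ ∃ y : K, y ^ (2:ℕ)^k + y = c) := by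
  have hsplit : k + k*(t-1) = k*t := by
    obtain ⟨t', rfl⟩ : ∃ t', t = t' + 1 := ⟨t-1, by omega⟩
    have : k*(t'+1) = k + k*t' := by ring
    simp [this]
  have hcard2 : Fintype.card K = 2^k * 2^(k*(t-1)) := by
    rw [hcard, ← pow_add, hsplit]
  have hfg : ∀ y : K, tauHom k t (phiHom k y) = 0 := by
    intro y
    show tau k t (y ^ (2:ℕ)^k + y) = 0
    rw [tau_add, tau_frob hcard, CharTwo.add_self_eq_zero]
  have hps : ∀ y : K, phiHom (K := K) k y = PS ({0, k} : Finset ℕ) y := by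
    intro y
    show y ^ (2:ℕ)^k + y = _
    unfold PS
    rw [Finset.sum_insert (by simp; omega), Finset.sum_singleton]
    norm_num; ring
  have hkf : (univ.filter fun y : K => phiHom (K := K) k y = 0).card ≤ 2^k := by
    rw [Finset.filter_congr (fun y _ => by rw [hps y])]
    exact PS_zero_card_le _ ⟨0, by simp⟩ (fun j hj => by
      simp at hj; rcases hj with rfl | rfl <;> omega)
  have hkg : (univ.filter fun x : K => tauHom (K := K) k t x = 0).card ≤ 2^(k*(t-1)) := by
    rw [Finset.filter_congr (fun y _ => by
      rw [show tauHom (K := K) k t y = tau k t y from rfl, tau_eq_PS hk])]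
    exact PS_zero_card_le _ ⟨0, Finset.mem_image.mpr ⟨0, mem_range.mpr ht, by norm_num⟩⟩
      (fun j hj => by
        obtain ⟨i, hi, rfl⟩ := Finset.mem_image.mp hj
        rw [mem_range] at hi
        exact Nat.mul_le_mul_left k (by omega))
  obtain ⟨h1, h2, h3⟩ := sandwich (phiHom k) (tauHom k t) (2^k) (2^(k*(t-1)))
    (by positivity) (by positivity) hcard2 hfg hkf hkg
  have hfe : (univ.filter fun y : K => y ^ (2:ℕ)^k + y = 0)
      = (univ.filter fun y : K => phiHom (K := K) k y = 0) :=
    Finset.filter_congr (fun y _ => Iff.rfl)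
  exact ⟨by rw [hfe]; exact h1, h3⟩

lemma count_curve (hk : 0 < k) (ht : 0 < t) (hcard : Fintype.card K = 2^(k*t)) (f : K → K) :
    Nat.card {z : K × K // z.2 ^ (2:ℕ)^k + z.2 = f z.1}
      = 2^k * (univ.filter fun x => tau k t (f x) = 0).card := by
  obtain ⟨hker, hcrit⟩ := phi_tau (K := K) hk ht hcard
  rw [Nat.card_eq_fintype_card, Fintype.card_subtype]
  rw [Finset.card_eq_sum_card_fiberwise
    (s := univ.filter fun z : K × K => z.2 ^ (2:ℕ)^k + z.2 = f z.1)
    (t := (univ : Finset K)) (f := Prod.fst) (fun x _ => mem_univ _)]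
  have hfib : ∀ x : K,
      ((univ.filter fun z : K × K => z.2 ^ (2:ℕ)^k + z.2 = f z.1).filter
        fun z => z.1 = x).card
      = (univ.filter fun y : K => y ^ (2:ℕ)^k + y = f x).card := by
    intro x
    refine Finset.card_bij' (fun z _ => z.2) (fun y _ => (x, y)) ?hi ?hj ?hli ?hri
    case hi =>
      intro z hz
      simp only [mem_filter, mem_univ, true_and] at hz ⊢
      rw [← hz.2]; exact hz.1
    case hj =>
      intro y hy
      have hy2 : y ^ (2:ℕ)^k + y = f x := (mem_filter.mp hy).2
      have h1 : (x, y) ∈ univ.filter fun z : K × K => z.2 ^ (2:ℕ)^k + z.2 = f z.1 :=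
        mem_filter.mpr ⟨mem_univ _, hy2⟩
      exact mem_filter.mpr ⟨h1, rfl⟩
    case hli =>
      intro z hz
      rw [mem_filter] at hz
      exact Prod.ext hz.2.symm rfl
    case hri => intro y _; rfl
  rw [Finset.sum_congr rfl fun x _ => hfib x]
  have hsets : (univ.filter fun y : K => y ^ (2:ℕ)^k + y = 0)
      = (univ.filter fun y : K => phiHom (K := K) k y = 0) :=
    Finset.filter_congr (fun y _ => Iff.rfl)
  have hval : ∀ x : K, (univ.filter fun y : K => y ^ (2:ℕ)^k + y = f x).card
      = if tau k t (f x) = 0 then 2^k else 0 := by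
    intro x
    by_cases h : tau k t (f x) = 0
    · rw [if_pos h]
      obtain ⟨y0, hy0⟩ := (hcrit (f x)).mp h
      have hcf := card_fiber_eq (phiHom k) (f x) ⟨y0, hy0⟩
      have hsx : (univ.filter fun y : K => y ^ (2:ℕ)^k + y = f x)
          = (univ.filter fun y : K => phiHom (K := K) k y = f x) :=
        Finset.filter_congr (fun y _ => Iff.rfl)
      rw [hsx, hcf, ← hsets]
      exact hker
    · rw [if_neg h]
      rw [Finset.card_eq_zero, Finset.filter_eq_empty_iff]
      intro y _
      intro hy
      exact h ((hcrit (f x)).mpr ⟨y, hy⟩)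
  rw [Finset.sum_congr rfl fun x _ => hval x]
  rw [← Finset.sum_filter, Finset.sum_const, smul_eq_mul, mul_comm]

lemma sum_Icc_one {β : Type*} [AddCommMonoid β] (M : ℕ) (F : ℕ → β) :
    ∑ i ∈ Icc 1 M, F i = ∑ b ∈ range M, F (b+1) := by
  apply Finset.sum_nbij' (fun i => i - 1) (fun b => b + 1)
  · intro a ha; rw [mem_Icc] at ha; rw [mem_range]; omega
  · intro a ha; rw [mem_range] at ha; rw [mem_Icc]; omega
  · intro a ha; rw [mem_Icc] at ha; omega
  · intro a ha; omega
  · intro a ha; rw [mem_Icc] at ha; congr 1; omega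

variable {k m : ℕ}

lemma key_identity (hk : 0 < k) (hm : 4 ≤ m) (hme : Even m)
    (hcard : Fintype.card K = 2^(k*(2*m))) (x : K) :
    tau k (2*m) (x * ∑ i ∈ Icc 1 (m/2), x ^ (2:ℕ)^(k*(2*i-1)))
      = (∑ a ∈ range m, x ^ (2:ℕ)^(k*(2*a))) * (∑ a ∈ range m, x ^ (2:ℕ)^(k*(2*a+1))) := by
  obtain ⟨M, hM⟩ := hme
  have hMm : m / 2 = M := by omega
  have hM2 : 2 ≤ M := by omega
  have h0m : 0 < m := by omega
  set g : ℕ → K := fun j => x ^ (2:ℕ)^(k*(j % (2*m))) with hg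
  have aux : ∀ q r, x ^ (2:ℕ)^(k*(2*m*q + r)) = x ^ (2:ℕ)^(k*r) := by
    intro q
    induction q with
    | zero => intro r; norm_num
    | succ q ih =>
      intro r
      have h1 : k*(2*m*(q+1) + r) = k*(2*m) + k*(2*m*q + r) := by ring
      rw [h1, ← pow_pow_eq, pow_card_self hcard, ih]
  have gpow : ∀ j, x ^ (2:ℕ)^(k*j) = g j := by
    intro j
    rw [hg]
    simp only
    conv_lhs => rw [show j = 2*m*(j/(2*m)) + j % (2*m) from by rw [Nat.div_add_mod]]
    exact aux _ _
  have gcon : ∀ a b : ℕ, a % (2*m) = b % (2*m) → g a = g b := by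
    intro a b h; rw [hg]; simp only; rw [h]
  have hIcc : (∑ i ∈ Icc 1 (m/2), x ^ (2:ℕ)^(k*(2*i-1)))
      = ∑ b ∈ range M, x ^ (2:ℕ)^(k*(2*b+1)) := by
    rw [hMm, sum_Icc_one]
    apply Finset.sum_congr rfl
    intro b _
    have he : 2*(b+1)-1 = 2*b+1 := by omega
    rw [he]
  rw [hIcc]
  show (∑ l ∈ range (2*m), (x * ∑ b ∈ range M, x ^ (2:ℕ)^(k*(2*b+1))) ^ (2:ℕ)^(k*l)) = _
  have hterm : ∀ l, (x * ∑ b ∈ range M, x ^ (2:ℕ)^(k*(2*b+1))) ^ (2:ℕ)^(k*l)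
      = ∑ b ∈ range M, g l * g (l + (2*b+1)) := by
    intro l
    rw [mul_pow, frob_sum, Finset.mul_sum]
    apply Finset.sum_congr rfl
    intro b _
    rw [pow_pow_eq, show k*(2*b+1) + k*l = k*(l + (2*b+1)) from by ring, gpow, gpow]
  rw [Finset.sum_congr rfl fun l _ => hterm l]
  rw [sum_even_odd (fun l => ∑ b ∈ range M, g l * g (l + (2*b+1))) m]
  have hA : (∑ a ∈ range m, x ^ (2:ℕ)^(k*(2*a))) = ∑ a ∈ range m, g (2*a) :=
    Finset.sum_congr rfl fun a _ => gpow (2*a)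
  have hB : (∑ a ∈ range m, x ^ (2:ℕ)^(k*(2*a+1))) = ∑ a ∈ range m, g (2*a+1) :=
    Finset.sum_congr rfl fun a _ => gpow (2*a+1)
  rw [hA, hB, Finset.sum_mul_sum]
  -- RHS inner transform
  have hR : ∀ a : ℕ, (∑ c ∈ range m, g (2*a) * g (2*c+1))
      = (∑ c ∈ range M, g (2*a) * g (2*a + (2*c+1)))
        + ∑ c ∈ range M, g (2*a) * g (2*a + m + (2*c+1)) := by
    intro a
    have hshift := sum_mod_shift (β := K) m a h0m (fun c => g (2*a) * g (2*c+1))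
    rw [hshift]
    have hcg : ∀ c ∈ range m, g (2*a) * g (2*((c + a) % m)+1) = g (2*a) * g (2*a + (2*c+1)) := by
      intro c _
      congr 1
      apply gcon
      rw [show 2*((c+a) % m) = (2*(c+a)) % (2*m) from (Nat.mul_mod_mul_left 2 (c+a) m).symm]
      rw [Nat.mod_add_mod]
      congr 1
      ring
    rw [Finset.sum_congr rfl hcg]
    rw [show m = M + M from by omega, Finset.sum_range_add]
    congr 1
    apply Finset.sum_congr rfl
    intro c _
    congr 1
    apply gcon
    congr 1
    omega
  rw [Finset.sum_congr rfl fun a _ => hR a]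
  rw [Finset.sum_add_distrib]
  congr 1
  -- remaining: odd part
  rw [Finset.sum_comm]
  conv_rhs => rw [Finset.sum_comm]
  -- goal: Σ_{b<M} Σ_{a<m} g(2a+1)*g((2a+1)+(2b+1)) = Σ_{c<M} Σ_{a<m} g(2a)*g(2a+m+(2c+1))
  rw [← Finset.sum_range_reflect (fun c => ∑ a ∈ range m, g (2*a) * g (2*a + m + (2*c+1))) M]
  apply Finset.sum_congr rfl
  intro b hb
  rw [mem_range] at hb
  have hsh := sum_mod_shift (β := K) m (b+1) h0m
    (fun a => g (2*a) * g (2*a + m + (2*(M-1-b)+1)))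
  rw [hsh]
  apply Finset.sum_congr rfl
  intro a _
  have h1 : g (2*((a + (b+1)) % m)) = g ((2*a+1) + (2*b+1)) := by
    apply gcon
    rw [show 2*((a+(b+1)) % m) = (2*(a+(b+1))) % (2*m) from (Nat.mul_mod_mul_left 2 _ m).symm]
    rw [Nat.mod_mod_of_dvd _ dvd_rfl]
    congr 1
    ring
  have h2 : g (2*((a + (b+1)) % m) + m + (2*(M-1-b)+1)) = g (2*a+1) := by
    apply gcon
    rw [show 2*((a+(b+1)) % m) = (2*(a+(b+1))) % (2*m) from (Nat.mul_mod_mul_left 2 _ m).symm]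
    rw [show (2*(a+(b+1))) % (2*m) + m + (2*(M-1-b)+1)
        = (2*(a+(b+1))) % (2*m) + (m + (2*(M-1-b)+1)) from by ring]
    rw [Nat.mod_add_mod]
    rw [show 2*(a+(b+1)) + (m + (2*(M-1-b)+1)) = (2*a+1) + 2*m from by omega]
    rw [Nat.add_mod_right]
  rw [h1, h2]
  ring

lemma part1_count (hk : 0 < k) (hm : 4 ≤ m) (hme : Even m)
    (hcard : Fintype.card K = 2^(k*(2*m))) :
    Nat.card {z : K × K // z.2 ^ (2:ℕ)^k + z.2
        = z.1 * ∑ i ∈ Icc 1 (m/2), z.1 ^ ((2:ℕ)^k)^(2*i-1)}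
      = 2^(k*(2*m-1)) := by
  have h0t : 0 < 2*m := by omega
  -- normalize exponents
  have hpred : ∀ z : K × K, (z.2 ^ (2:ℕ)^k + z.2
        = z.1 * ∑ i ∈ Icc 1 (m/2), z.1 ^ ((2:ℕ)^k)^(2*i-1))
      ↔ (z.2 ^ (2:ℕ)^k + z.2 = z.1 * ∑ i ∈ Icc 1 (m/2), z.1 ^ (2:ℕ)^(k*(2*i-1))) := by
    intro z
    have : ∀ i ∈ Icc 1 (m/2), z.1 ^ ((2:ℕ)^k)^(2*i-1) = z.1 ^ (2:ℕ)^(k*(2*i-1)) := by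
      intro i _
      rw [← pow_mul]
    rw [Finset.sum_congr rfl this]
  rw [Nat.card_congr (Equiv.subtypeEquivRight hpred)]
  rw [count_curve hk h0t hcard (fun x => x * ∑ i ∈ Icc 1 (m/2), x ^ (2:ℕ)^(k*(2*i-1)))]
  -- now count zeros of tau ∘ f via key identity
  set A : K → K := fun x => ∑ a ∈ range m, x ^ (2:ℕ)^(k*(2*a)) with hA
  have hAB : ∀ x : K, (A x) ^ (2:ℕ)^k = ∑ a ∈ range m, x ^ (2:ℕ)^(k*(2*a+1)) := by
    intro x
    rw [hA]
    simp only
    rw [frob_sum]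
    apply Finset.sum_congr rfl
    intro a _
    rw [pow_pow_eq, show k*(2*a) + k = k*(2*a+1) from by ring]
  have hzero : ∀ x : K, (tau k (2*m) (x * ∑ i ∈ Icc 1 (m/2), x ^ (2:ℕ)^(k*(2*i-1))) = 0)
      ↔ A x = 0 := by
    intro x
    rw [key_identity hk hm hme hcard x, ← hAB x]
    constructor
    · intro h
      rcases mul_eq_zero.mp h with h | h
      · exact h
      · exact pow_eq_zero_iff (by positivity) |>.mp h
    · intro h; rw [h]; ring
  rw [Finset.filter_congr (fun x _ => hzero x)]
  -- sandwich count for A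
  set sA : Finset ℕ := (range m).image (fun a => k*(2*a)) with hsA
  have hAPS : ∀ x : K, A x = PS sA x := by
    intro x
    rw [hA, hsA]
    simp only
    unfold PS
    rw [Finset.sum_image (fun a _ b _ h => by
      have := Nat.eq_of_mul_eq_mul_left hk h
      omega)]
  obtain ⟨m', hm'⟩ : ∃ m', m = m' + 1 := ⟨m-1, by omega⟩
  have hsplit : k*(2*m-2) + 2*k = k*(2*m) := by
    rw [hm', show 2*(m'+1)-2 = 2*m' from by omega, show 2*(m'+1) = 2*m'+2 from by omega]
    ring
  have hcard2 : Fintype.card K = 2^(k*(2*m-2)) * 2^(2*k) := by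
    rw [hcard, ← pow_add, hsplit]
  set Ahom : K →+ K := AddMonoidHom.mk' (PS sA) (PS_add sA) with hAhom
  set g2 : K →+ K := AddMonoidHom.mk' (PS ({0, 2*k} : Finset ℕ)) (PS_add _) with hg2
  have hfg : ∀ y : K, g2 (Ahom y) = 0 := by
    intro y
    show PS {0, 2*k} (PS sA y) = 0
    have e1 : PS ({0, 2*k} : Finset ℕ) (PS sA y) = PS sA y + (PS sA y) ^ (2:ℕ)^(2*k) := by
      unfold PS
      rw [Finset.sum_insert (by simp; omega), Finset.sum_singleton]
      norm_num
    rw [e1]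
    have e2 : (PS sA y) ^ (2:ℕ)^(2*k) = PS sA y := by
      rw [← hAPS y, hA]
      simp only
      rw [frob_sum]
      have e3 : ∀ a, (y ^ (2:ℕ)^(k*(2*a))) ^ (2:ℕ)^(2*k) = y ^ (2:ℕ)^(k*(2*(a+1))) := by
        intro a
        rw [pow_pow_eq, show k*(2*a) + 2*k = k*(2*(a+1)) from by ring]
      rw [Finset.sum_congr rfl fun a _ => e3 a]
      have h2 := Finset.sum_range_succ' (fun a => y ^ (2:ℕ)^(k*(2*a))) m
      have h3 := Finset.sum_range_succ (fun a => y ^ (2:ℕ)^(k*(2*a))) m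
      have h4 : y ^ (2:ℕ)^(k*(2*m)) = y ^ (2:ℕ)^(k*(2*0)) := by
        simp [pow_card_self hcard]
      rw [h4] at h3
      exact add_right_cancel (h2.symm.trans h3)
    rw [e2, CharTwo.add_self_eq_zero]
  have hkf : (univ.filter fun y : K => Ahom y = 0).card ≤ 2^(k*(2*m-2)) := by
    have hset : (univ.filter fun y : K => Ahom y = 0)
        = (univ.filter fun y : K => PS sA y = 0) :=
      Finset.filter_congr fun y _ => Iff.rfl
    rw [hset]
    apply PS_zero_card_le sA ⟨0, Finset.mem_image.mpr ⟨0, mem_range.mpr (by omega), by norm_num⟩⟩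
    intro j hj
    obtain ⟨a, ha, rfl⟩ := Finset.mem_image.mp hj
    rw [mem_range] at ha
    exact Nat.mul_le_mul_left k (by omega)
  have hkg : (univ.filter fun y : K => g2 y = 0).card ≤ 2^(2*k) := by
    have hset : (univ.filter fun y : K => g2 y = 0)
        = (univ.filter fun y : K => PS ({0, 2*k} : Finset ℕ) y = 0) :=
      Finset.filter_congr fun y _ => Iff.rfl
    rw [hset]
    apply PS_zero_card_le _ ⟨0, by simp⟩
    intro j hj
    simp at hj
    rcases hj with rfl | rfl <;> omega
  obtain ⟨h1, _, _⟩ := sandwich Ahom g2 (2^(k*(2*m-2))) (2^(2*k))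
    (by positivity) (by positivity) hcard2 hfg hkf hkg
  have hAcount : (univ.filter fun x : K => A x = 0).card = 2^(k*(2*m-2)) := by
    rw [show (univ.filter fun x : K => A x = 0) = (univ.filter fun y : K => Ahom y = 0)
      from Finset.filter_congr fun y _ => by rw [hAPS y]; exact Iff.rfl]
    exact h1
  rw [hAcount, ← pow_add]
  congr 1
  rw [hm', show 2*(m'+1)-2 = 2*m' from by omega, show 2*(m'+1)-1 = 2*m'+1 from by omega]
  ring

lemma tau_sum {ι : Type*} (s : Finset ι) (f : ι → K) :
    tau k t (∑ i ∈ s, f i) = ∑ i ∈ s, tau k t (f i) :=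
  map_sum (tauHom k t) f s

lemma tau_smul (hμ : (μ:K) ^ (2:ℕ)^k = μ) (z : K) : tau k t (μ * z) = μ * tau k t z := by
  unfold tau
  rw [Finset.mul_sum]
  apply Finset.sum_congr rfl
  intro i _
  rw [mul_pow, Tpow hμ i]

lemma tau_transpose (hcard : Fintype.card K = 2^(k*t)) {j : ℕ} (hj : j ≤ t) (a b : K) :
    tau k t (a * b ^ (2:ℕ)^(k*j)) = tau k t (a ^ (2:ℕ)^(k*(t-j)) * b) := by
  have h1 : tau k t (a * b ^ (2:ℕ)^(k*j))
      = tau k t ((a * b ^ (2:ℕ)^(k*j)) ^ (2:ℕ)^(k*(t-j))) := (tau_pow hcard (t-j) _).symm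
  rw [h1, mul_pow, pow_pow_eq, show k*j + k*(t-j) = k*t from by
    rw [← Nat.mul_add]; congr 1; omega, pow_card_self hcard]

lemma sq_injective : Function.Injective (fun z : K => z * z) := by
  intro a b h
  simp only at h
  have hfr : (a+b) ^ (2:ℕ)^1 = a ^ (2:ℕ)^1 + b ^ (2:ℕ)^1 := frob_add 1 a b
  have h2 : (a+b)^2 = 0 := by
    rw [show ((2:ℕ)^1 : ℕ) = 2 from by norm_num] at hfr
    rw [hfr, pow_two, pow_two, h, CharTwo.add_self_eq_zero]
  have h3 : a + b = 0 := by
    have := pow_eq_zero_iff (M₀ := K) (a := a+b) (n := 2) (by norm_num)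
    exact this.mp h2
  rw [CharTwo.add_eq_iff_eq_add, zero_add] at h3
  exact h3

lemma part2_ne (hk : 0 < k) (ht : 0 < t) (hm : 4 ≤ m) (hme : Even m) (htlt : t < 2*m)
    (hcard : Fintype.card K = 2^(k*t)) :
    ((Nat.card {z : K × K // z.2 ^ (2:ℕ)^k + z.2
        = z.1 * ∑ i ∈ Icc 1 (m/2), z.1 ^ ((2:ℕ)^k)^(2*i-1)} : ℤ)
      - 2^(k*t)) ^ 2
    ≠ ((2:ℤ)^k - 1)^2 * ((2:ℤ)^k)^(2*(m-1)) * 2^(k*t) := by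
  obtain ⟨M, hMM⟩ := hme
  have hMm : m / 2 = M := by omega
  have hM2 : 2 ≤ M := by omega
  set R : K → K := fun x => ∑ i ∈ Icc 1 (m/2), x ^ (2:ℕ)^(k*(2*i-1)) with hR
  set Qf : K → K := fun x => tau k t (x * R x) with hQf
  set Bf : K → K → K := fun x d => tau k t (x * R d + d * R x) with hBf
  have hR_add : ∀ x y : K, R (x + y) = R x + R y := by
    intro x y
    rw [hR]; simp only
    rw [← Finset.sum_add_distrib]
    exact Finset.sum_congr rfl fun i _ => frob_add _ x y
  have hR_smul : ∀ (μ x : K), μ ^ (2:ℕ)^k = μ → R (μ * x) = μ * R x := by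
    intro μ x hμ
    rw [hR]; simp only
    rw [Finset.mul_sum]
    exact Finset.sum_congr rfl fun i _ => by rw [mul_pow, Tpow hμ]
  have hQ_add : ∀ x d : K, Qf (x + d) = Qf x + Qf d + Bf x d := by
    intro x d
    rw [hQf, hBf]; simp only
    rw [← tau_add, ← tau_add]
    congr 1
    rw [hR_add]
    ring
  have hQ_smul : ∀ (ν x : K), ν ^ (2:ℕ)^k = ν → Qf (ν * x) = ν^2 * Qf x := by
    intro ν x hν
    rw [hQf]; simp only
    have h1 : ν * x * R (ν * x) = ν^2 * (x * R x) := by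
      rw [hR_smul ν x hν]; ring
    rw [h1]
    apply tau_smul
    rw [← pow_mul, mul_comm 2 ((2:ℕ)^k), pow_mul, hν]
  have hQ_T : ∀ x : K, (Qf x) ^ (2:ℕ)^k = Qf x := fun x => frob_tau hcard _
  have hB_T : ∀ x d : K, (Bf x d) ^ (2:ℕ)^k = Bf x d := fun x d => frob_tau hcard _
  have hB_addl : ∀ x x' d : K, Bf (x + x') d = Bf x d + Bf x' d := by
    intro x x' d
    rw [hBf]; simp only
    rw [← tau_add]
    congr 1
    rw [hR_add]
    ring
  have hB_addr : ∀ x d d' : K, Bf x (d + d') = Bf x d + Bf x d' := by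
    intro x d d'
    rw [hBf]; simp only
    rw [← tau_add]
    congr 1
    rw [hR_add]
    ring
  have hB_smull : ∀ (μ x d : K), μ ^ (2:ℕ)^k = μ → Bf (μ * x) d = μ * Bf x d := by
    intro μ x d hμ
    rw [hBf]; simp only
    have h1 : μ * x * R d + d * R (μ * x) = μ * (x * R d + d * R x) := by
      rw [hR_smul μ x hμ]; ring
    rw [h1, tau_smul hμ]
  obtain ⟨z₀, hz₀⟩ := exists_T2n_ne hk ht hcard
  have hpsiz₀ : psi (k*t) z₀ = -1 := by unfold psi; rw [if_neg hz₀]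
  set S : ℤ := ∑ x : K, psi (k*t) (z₀ * Qf x) with hS
  set W : Finset K := univ.filter (fun d => ∀ x, Bf x d = 0) with hW
  set Zc : ℕ := (univ.filter fun x : K => Qf x = 0).card with hZc
  set T : Finset K := univ.filter (fun y : K => y ^ (2:ℕ)^k + y = 0) with hT
  have hTmem : ∀ z : K, z ∈ T ↔ z ^ (2:ℕ)^k = z := by
    intro z
    rw [hT, mem_filter]
    constructor
    · rintro ⟨-, h⟩; rwa [CharTwo.add_eq_iff_eq_add, zero_add] at h
    · intro h; exact ⟨mem_univ _, by rw [CharTwo.add_eq_iff_eq_add, zero_add]; exact h⟩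
  have hTcard : T.card = 2^k := (phi_tau hk ht hcard).1
  have h0T : (0:K) ∈ T := by
    rw [hTmem]
    exact zero_pow (by positivity)
  have hTadd : ∀ a b : K, a ^ (2:ℕ)^k = a → b ^ (2:ℕ)^k = b → (a+b) ^ (2:ℕ)^k = (a+b) := by
    intro a b ha hb; rw [frob_add, ha, hb]
  -- N = 2^k * Zc
  have hN : Nat.card {z : K × K // z.2 ^ (2:ℕ)^k + z.2
        = z.1 * ∑ i ∈ Icc 1 (m/2), z.1 ^ ((2:ℕ)^k)^(2*i-1)} = 2^k * Zc := by
    have hpred : ∀ z : K × K, (z.2 ^ (2:ℕ)^k + z.2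
          = z.1 * ∑ i ∈ Icc 1 (m/2), z.1 ^ ((2:ℕ)^k)^(2*i-1))
        ↔ (z.2 ^ (2:ℕ)^k + z.2 = z.1 * R z.1) := by
      intro z
      rw [hR]
      simp only
      have hc : ∀ i ∈ Icc 1 (m/2), z.1 ^ ((2:ℕ)^k)^(2*i-1) = z.1 ^ (2:ℕ)^(k*(2*i-1)) :=
        fun i _ => by rw [← pow_mul]
      rw [Finset.sum_congr rfl hc]
    rw [Nat.card_congr (Equiv.subtypeEquivRight hpred)]
    rw [count_curve hk ht hcard (fun x => x * R x), hZc]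
  -- double sum
  have key : (∑ x : K, ∑ μ ∈ T, psi (k*t) (z₀ * μ * Qf x)) = (2^k : ℤ) * Zc := by
    have hinner : ∀ x : K, (∑ μ ∈ T, psi (k*t) (z₀ * μ * Qf x))
        = if Qf x = 0 then ((2:ℤ)^k) else 0 := by
      intro x
      by_cases hQ : Qf x = 0
      · rw [if_pos hQ]
        have h1 : ∀ μ ∈ T, psi (k*t) (z₀ * μ * Qf x) = 1 := by
          intro μ _; rw [hQ, mul_zero, psi_zero]
        rw [Finset.sum_congr rfl h1, Finset.sum_const, hTcard]
        simp
      · rw [if_neg hQ]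
        have hQT : (Qf x)⁻¹ ^ (2:ℕ)^k = (Qf x)⁻¹ := by rw [inv_pow, hQ_T]
        apply sum_cancel T _ ((Qf x)⁻¹)
        · intro y
          constructor
          · intro hy
            rw [hTmem] at hy ⊢
            exact hTadd _ _ hy hQT
          · intro hy
            rw [hTmem] at hy ⊢
            have h2 : y = (y + (Qf x)⁻¹) + (Qf x)⁻¹ := by
              rw [add_assoc, CharTwo.add_self_eq_zero, add_zero]
            rw [h2]
            exact hTadd _ _ hy hQT
        · intro μ _
          have hinv : (Qf x)⁻¹ * Qf x = 1 := inv_mul_cancel₀ hQ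
          have harg : z₀ * (μ + (Qf x)⁻¹) * Qf x = z₀ * μ * Qf x + z₀ := by
            linear_combination z₀ * hinv
          rw [harg, psi_add hcard, hpsiz₀]
          ring
    rw [Finset.sum_congr rfl fun x _ => hinner x, ← Finset.sum_filter, Finset.sum_const]
    rw [← hZc, nsmul_eq_mul, mul_comm]
  have key2 : (∑ x : K, ∑ μ ∈ T, psi (k*t) (z₀ * μ * Qf x))
      = 2^(k*t) + ((2:ℤ)^k - 1) * S := by
    rw [Finset.sum_comm]
    rw [← Finset.add_sum_erase T _ h0T]
    have h00 : (∑ x : K, psi (k*t) (z₀ * 0 * Qf x)) = (2^(k*t) : ℤ) := by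
      have h1 : ∀ x : K, psi (k*t) (z₀ * 0 * Qf x) = 1 := fun x => by
        rw [mul_zero, zero_mul, psi_zero]
      rw [Finset.sum_congr rfl fun x _ => h1 x, Finset.sum_const, card_univ, hcard]
      simp
    have herase : ∀ μ ∈ T.erase 0, (∑ x : K, psi (k*t) (z₀ * μ * Qf x)) = S := by
      intro μ hμe
      obtain ⟨hμ0, hμT⟩ := Finset.mem_erase.mp hμe
      have himg : T.image (fun z => z * z) = T := by
        apply Finset.eq_of_subset_of_card_le
        · intro w hw
          obtain ⟨z, hz, rfl⟩ := Finset.mem_image.mp hw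
          rw [hTmem] at hz ⊢
          rw [mul_pow, hz]
        · rw [Finset.card_image_of_injective T sq_injective]
      obtain ⟨ν, hνT, hνν⟩ := Finset.mem_image.mp (by rw [himg]; exact hμT)
      have hν0 : ν ≠ 0 := by
        rintro rfl
        rw [mul_zero] at hνν
        exact hμ0 hνν.symm
      have hνk : ν ^ (2:ℕ)^k = ν := (hTmem ν).mp hνT
      have hterm : ∀ x : K, psi (k*t) (z₀ * μ * Qf x) = psi (k*t) (z₀ * Qf (ν * x)) := by
        intro x
        congr 1
        rw [hQ_smul ν x hνk, ← hνν]
        ring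
      rw [Finset.sum_congr rfl fun x _ => hterm x, hS]
      exact Fintype.sum_equiv (Equiv.mulLeft₀ ν hν0) _ _ (fun x => rfl)
    rw [Finset.sum_congr rfl herase, Finset.sum_const, Finset.card_erase_of_mem h0T, hTcard, h00]
    rw [nsmul_eq_mul]
    congr 1
    push_cast [Nat.one_le_two_pow]
    ring
  have hNS : ((2:ℤ)^k) * (Zc : ℤ) = 2^(k*t) + ((2:ℤ)^k - 1) * S := by
    rw [← key, key2]
  -- S^2
  have hS2 : S^2 = 2^(k*t) * ∑ d ∈ W, psi (k*t) (z₀ * Qf d) := by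
    have h1 : S^2 = ∑ x : K, ∑ y : K, psi (k*t) (z₀ * Qf x + z₀ * Qf y) := by
      rw [hS, pow_two, Finset.sum_mul_sum]
      exact Finset.sum_congr rfl fun x _ =>
        Finset.sum_congr rfl fun y _ => (psi_add hcard _ _).symm
    rw [h1]
    have htwo : (2:K) = 0 := CharTwo.two_eq_zero
    have hre : ∀ x : K, (∑ y : K, psi (k*t) (z₀ * Qf x + z₀ * Qf y))
        = ∑ d : K, psi (k*t) (z₀ * Qf d + z₀ * Bf x d) := by
      intro x
      have h2 : ∀ d : K, psi (k*t) (z₀ * Qf x + z₀ * Qf (x + d))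
          = psi (k*t) (z₀ * Qf d + z₀ * Bf x d) := by
        intro d
        congr 1
        have hq := hQ_add x d
        linear_combination z₀ * hq + (z₀ * Qf x) * htwo
      calc (∑ y : K, psi (k*t) (z₀ * Qf x + z₀ * Qf y))
          = ∑ d : K, psi (k*t) (z₀ * Qf x + z₀ * Qf (x + d)) :=
            (Fintype.sum_equiv (Equiv.addLeft x) _ _ (fun d => rfl)).symm
        _ = _ := Finset.sum_congr rfl fun d _ => h2 d
    rw [Finset.sum_congr rfl fun x _ => hre x, Finset.sum_comm]
    have hin : ∀ d : K, (∑ x : K, psi (k*t) (z₀ * Qf d + z₀ * Bf x d))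
        = psi (k*t) (z₀ * Qf d) * (if (∀ x, Bf x d = 0) then ((2:ℤ)^(k*t)) else 0) := by
      intro d
      have hsplit : ∀ x : K, psi (k*t) (z₀ * Qf d + z₀ * Bf x d)
          = psi (k*t) (z₀ * Qf d) * psi (k*t) (z₀ * Bf x d) := fun x => psi_add hcard _ _
      rw [Finset.sum_congr rfl fun x _ => hsplit x, ← Finset.mul_sum]
      congr 1
      by_cases hd : ∀ x, Bf x d = 0
      · rw [if_pos hd]
        have h3 : ∀ x : K, psi (k*t) (z₀ * Bf x d) = 1 := fun x => by
          rw [hd x, mul_zero, psi_zero]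
        rw [Finset.sum_congr rfl fun x _ => h3 x, Finset.sum_const, card_univ, hcard]
        simp
      · rw [if_neg hd]
        push_neg at hd
        obtain ⟨x₁, hx₁⟩ := hd
        have hμ : ((Bf x₁ d)⁻¹) ^ (2:ℕ)^k = (Bf x₁ d)⁻¹ := by rw [inv_pow, hB_T]
        apply sum_cancel univ _ ((Bf x₁ d)⁻¹ * x₁)
        · intro x; simp
        · intro x _
          have h4 : z₀ * Bf (x + (Bf x₁ d)⁻¹ * x₁) d = z₀ * Bf x d + z₀ := by
            rw [hB_addl, hB_smull _ _ _ hμ, inv_mul_cancel₀ hx₁]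
            ring
          rw [h4, psi_add hcard, hpsiz₀]
          ring
    rw [Finset.sum_congr rfl fun d _ => hin d]
    have h5 : ∀ d : K, psi (k*t) (z₀ * Qf d) * (if (∀ x, Bf x d = 0) then ((2:ℤ)^(k*t)) else 0)
        = if (∀ x, Bf x d = 0) then (2:ℤ)^(k*t) * psi (k*t) (z₀ * Qf d) else 0 := by
      intro d
      by_cases hd : ∀ x, Bf x d = 0
      · rw [if_pos hd, if_pos hd]; ring
      · rw [if_neg hd, if_neg hd]; ring
    rw [Finset.sum_congr rfl fun d _ => h5 d, ← Finset.sum_filter, ← Finset.mul_sum, ← hW]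
  -- dichotomy
  have hWsum : (∑ d ∈ W, psi (k*t) (z₀ * Qf d)) = 0
      ∨ (∑ d ∈ W, psi (k*t) (z₀ * Qf d)) = (W.card : ℤ) := by
    by_cases hex : ∃ d₀ ∈ W, T2n (k*t) (z₀ * Qf d₀) ≠ 0
    · left
      obtain ⟨d₀, hd₀W, hd₀⟩ := hex
      have hd₀B : ∀ x, Bf x d₀ = 0 := (Finset.mem_filter.mp hd₀W).2
      apply sum_cancel W _ d₀
      · intro x
        constructor
        · intro hx
          rw [hW, mem_filter] at hx ⊢
          refine ⟨mem_univ _, fun y => ?_⟩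
          rw [hB_addr, hx.2 y, hd₀B y, add_zero]
        · intro hx
          rw [hW, mem_filter] at hx ⊢
          refine ⟨mem_univ _, fun y => ?_⟩
          have h6 : x = (x + d₀) + d₀ := by
            rw [add_assoc, CharTwo.add_self_eq_zero, add_zero]
          rw [h6, hB_addr, hx.2 y, hd₀B y, add_zero]
      · intro x _
        have harg : z₀ * Qf (x + d₀) = z₀ * Qf x + z₀ * Qf d₀ := by
          rw [hQ_add, hd₀B x, add_zero, mul_add]
        rw [harg, psi_add hcard]
        have h7 : psi (k*t) (z₀ * Qf d₀) = -1 := by unfold psi; rw [if_neg hd₀]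
        rw [h7]; ring
    · right
      push_neg at hex
      have h8 : ∀ d ∈ W, psi (k*t) (z₀ * Qf d) = 1 := by
        intro d hd; unfold psi; rw [if_pos (hex d hd)]
      rw [Finset.sum_congr rfl h8, Finset.sum_const]
      simp
  -- bound on W
  have hWb : W.card < 2^(k*(2*(m-1))) := by
    rcases Nat.lt_or_ge t (2*m-2) with hts | htl
    · calc W.card ≤ (univ : Finset K).card := Finset.card_filter_le _ _
        _ = 2^(k*t) := by rw [card_univ, hcard]
        _ < 2^(k*(2*(m-1))) := Nat.pow_lt_pow_right (by norm_num)
            ((Nat.mul_lt_mul_left hk).mpr (by omega))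
    · set E : K → K := fun d => R d + ∑ i ∈ Icc 1 (m/2), d ^ (2:ℕ)^(k*(t-(2*i-1))) with hE
      have hBE : ∀ x d : K, Bf x d = tau k t (x * E d) := by
        intro x d
        rw [hBf, hE]; simp only
        rw [tau_add]
        have h2 : tau k t (d * R x)
            = tau k t (x * ∑ i ∈ Icc 1 (m/2), d ^ (2:ℕ)^(k*(t-(2*i-1)))) := by
          rw [hR]; simp only
          rw [Finset.mul_sum, Finset.mul_sum, tau_sum, tau_sum]
          apply Finset.sum_congr rfl
          intro i hi
          rw [mem_Icc] at hi
          have hj : 2*i-1 ≤ t := by omega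
          rw [tau_transpose hcard hj d x, mul_comm]
        rw [h2, ← tau_add]
        congr 1
        ring
      have hEW : ∀ d ∈ W, E d = 0 := by
        intro d hdW
        by_contra hEd
        obtain ⟨z₁, hz₁⟩ := exists_tau_ne hk ht hcard
        have hB := (Finset.mem_filter.mp hdW).2 (z₁ * (E d)⁻¹)
        rw [hBE] at hB
        rw [show z₁ * (E d)⁻¹ * E d = z₁ from by field_simp] at hB
        exact hz₁ hB
      obtain ht2 | ht2 : t = 2*m-2 ∨ t = 2*m-1 := by omega
      · -- t = 2m-2 : cancellation case
        set sL : Finset ℕ := ((Icc 1 (M-1)).image fun i => k*(2*i-2))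
            ∪ ((Icc 1 (M-1)).image fun i => k*(t-2*i)) with hsL
        have hEd : ∀ d : K, E d = (∑ i ∈ Icc 1 (M-1), d ^ (2:ℕ)^(k*(2*i-1)))
            + ∑ i ∈ Icc 1 (M-1), d ^ (2:ℕ)^(k*(t-(2*i-1))) := by
          intro d
          rw [hE, hR]; simp only
          rw [hMm, show M = (M-1)+1 from by omega]
          rw [Finset.sum_Icc_succ_top (by omega), Finset.sum_Icc_succ_top (by omega)]
          have hcanc : d ^ (2:ℕ)^(k*(2*((M-1)+1)-1)) = d ^ (2:ℕ)^(k*(t-(2*((M-1)+1)-1))) := by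
            have h' : k*(2*((M-1)+1)-1) = k*(t-(2*((M-1)+1)-1)) := by congr 1; omega
            rw [h']
          rw [hcanc]
          have hgen : ∀ A B x : K, (A + x) + (B + x) = A + B := by
            intro A B x
            calc (A+x)+(B+x) = (A+B) + (x+x) := by ring
              _ = A + B := by rw [CharTwo.add_self_eq_zero, add_zero]
          exact hgen _ _ _
        have hdisj : Disjoint ((Icc 1 (M-1)).image fun i => k*(2*i-2))
            ((Icc 1 (M-1)).image fun i => k*(t-2*i)) := by
          rw [Finset.disjoint_left]
          intro a ha hb
          obtain ⟨i, hi, rfl⟩ := Finset.mem_image.mp ha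
          obtain ⟨j, hj, hji⟩ := Finset.mem_image.mp hb
          rw [mem_Icc] at hi hj
          have := Nat.eq_of_mul_eq_mul_left hk hji
          omega
        have hPSL : ∀ d ∈ W, PS sL d = 0 := by
          intro d hdW
          have hfr : (PS sL d) ^ (2:ℕ)^k = E d := by
            unfold PS
            rw [hsL, frob_sum, Finset.sum_union hdisj]
            rw [Finset.sum_image (fun a ha b hb h => by
                rw [Finset.mem_coe, mem_Icc] at ha hb
                have := Nat.eq_of_mul_eq_mul_left hk h; omega),
              Finset.sum_image (fun a ha b hb h => by
                rw [Finset.mem_coe, mem_Icc] at ha hb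
                have := Nat.eq_of_mul_eq_mul_left hk h; omega)]
            rw [hEd d]
            congr 1
            · apply Finset.sum_congr rfl
              intro i hi
              rw [mem_Icc] at hi
              rw [pow_pow_eq, show k*(2*i-2)+k = k*(2*i-1) from by
                rw [← Nat.mul_succ]; congr 1; omega]
            · apply Finset.sum_congr rfl
              intro i hi
              rw [mem_Icc] at hi
              rw [pow_pow_eq, show k*(t-2*i)+k = k*(t-(2*i-1)) from by
                rw [← Nat.mul_succ]; congr 1; omega]
          have h9 : (PS sL d) ^ (2:ℕ)^k = 0 := by rw [hfr, hEW d hdW]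
          exact (pow_eq_zero_iff (by positivity)).mp h9
        have hsub : W ⊆ univ.filter (fun d : K => PS sL d = 0) := by
          intro d hd
          rw [mem_filter]
          exact ⟨mem_univ _, hPSL d hd⟩
        have hne : sL.Nonempty := by
          refine ⟨k*(2*1-2), Finset.mem_union_left _ (Finset.mem_image.mpr
            ⟨1, mem_Icc.mpr ⟨le_refl 1, by omega⟩, rfl⟩)⟩
        have hbd := PS_zero_card_le (K := K) sL hne (D := k*(2*m-4)) (fun j hj => by
          rw [hsL, Finset.mem_union] at hj
          rcases hj with hj | hj <;>
          · obtain ⟨i, hi, rfl⟩ := Finset.mem_image.mp hj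
            rw [mem_Icc] at hi
            exact Nat.mul_le_mul_left k (by omega))
        calc W.card ≤ _ := Finset.card_le_card hsub
          _ ≤ 2^(k*(2*m-4)) := hbd
          _ < 2^(k*(2*(m-1))) := Nat.pow_lt_pow_right (by norm_num)
              ((Nat.mul_lt_mul_left hk).mpr (by omega))
      · -- t = 2m-1
        set sL : Finset ℕ := ((Icc 1 (m/2)).image fun i => k*(2*i-2))
            ∪ ((Icc 1 (m/2)).image fun i => k*(t-2*i)) with hsL
        have hdisj : Disjoint ((Icc 1 (m/2)).image fun i => k*(2*i-2))
            ((Icc 1 (m/2)).image fun i => k*(t-2*i)) := by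
          rw [Finset.disjoint_left]
          intro a ha hb
          obtain ⟨i, hi, rfl⟩ := Finset.mem_image.mp ha
          obtain ⟨j, hj, hji⟩ := Finset.mem_image.mp hb
          rw [mem_Icc] at hi hj
          have := Nat.eq_of_mul_eq_mul_left hk hji
          omega
        have hPSL : ∀ d ∈ W, PS sL d = 0 := by
          intro d hdW
          have hfr : (PS sL d) ^ (2:ℕ)^k = E d := by
            unfold PS
            rw [hsL, frob_sum, Finset.sum_union hdisj]
            rw [Finset.sum_image (fun a ha b hb h => by
                rw [Finset.mem_coe, mem_Icc] at ha hb
                have := Nat.eq_of_mul_eq_mul_left hk h; omega),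
              Finset.sum_image (fun a ha b hb h => by
                rw [Finset.mem_coe, mem_Icc] at ha hb
                have := Nat.eq_of_mul_eq_mul_left hk h; omega)]
            rw [hE, hR]; simp only
            congr 1
            · apply Finset.sum_congr rfl
              intro i hi
              rw [mem_Icc] at hi
              rw [pow_pow_eq, show k*(2*i-2)+k = k*(2*i-1) from by
                rw [← Nat.mul_succ]; congr 1; omega]
            · apply Finset.sum_congr rfl
              intro i hi
              rw [mem_Icc] at hi
              rw [pow_pow_eq, show k*(t-2*i)+k = k*(t-(2*i-1)) from by
                rw [← Nat.mul_succ]; congr 1; omega]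
          have h9 : (PS sL d) ^ (2:ℕ)^k = 0 := by rw [hfr, hEW d hdW]
          exact (pow_eq_zero_iff (by positivity)).mp h9
        have hsub : W ⊆ univ.filter (fun d : K => PS sL d = 0) := by
          intro d hd
          rw [mem_filter]
          exact ⟨mem_univ _, hPSL d hd⟩
        have hne : sL.Nonempty := by
          refine ⟨k*(2*1-2), Finset.mem_union_left _ (Finset.mem_image.mpr
            ⟨1, mem_Icc.mpr ⟨le_refl 1, by omega⟩, rfl⟩)⟩
        have hbd := PS_zero_card_le (K := K) sL hne (D := k*(2*m-3)) (fun j hj => by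
          rw [hsL, Finset.mem_union] at hj
          rcases hj with hj | hj <;>
          · obtain ⟨i, hi, rfl⟩ := Finset.mem_image.mp hj
            rw [mem_Icc] at hi
            exact Nat.mul_le_mul_left k (by omega))
        calc W.card ≤ _ := Finset.card_le_card hsub
          _ ≤ 2^(k*(2*m-3)) := hbd
          _ < 2^(k*(2*(m-1))) := Nat.pow_lt_pow_right (by norm_num)
              ((Nat.mul_lt_mul_left hk).mpr (by omega))
  -- conclusion
  intro hext
  rw [hN] at hext
  have hNZ : ((2^k * Zc : ℕ) : ℤ) - 2^(k*t) = ((2:ℤ)^k - 1) * S := by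
    push_cast
    rw [hNS]
    ring
  rw [hNZ, mul_pow, mul_assoc] at hext
  have hpne : ((2:ℤ)^k - 1) ≠ 0 := by
    have h2 : (2:ℤ)^1 ≤ (2:ℤ)^k := pow_le_pow_right₀ (by norm_num) hk
    simp at h2
    omega
  have hScancel : S^2 = ((2:ℤ)^k)^(2*(m-1)) * 2^(k*t) :=
    mul_left_cancel₀ (pow_ne_zero 2 hpne) hext
  rw [hS2] at hScancel
  rcases hWsum with h0 | hWc
  · rw [h0, mul_zero] at hScancel
    have hpos : (0:ℤ) < ((2:ℤ)^k)^(2*(m-1)) * 2^(k*t) := by positivity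
    omega
  · rw [hWc] at hScancel
    have hq0 : ((2:ℤ))^(k*t) ≠ 0 := by positivity
    have hWcard : (W.card : ℤ) = ((2:ℤ)^k)^(2*(m-1)) :=
      mul_left_cancel₀ hq0 (hScancel.trans (by ring))
    have hWc2 : (W.card : ℤ) = ((2:ℤ))^(k*(2*(m-1))) := by rw [hWcard, ← pow_mul]
    have hWn : W.card = 2^(k*(2*(m-1))) := by exact_mod_cast hWc2
    omega

end VdG


/-- For even `m ≥ 4` and `R(x) = ∑_{i=1}^{m/2} x^{p^{2i-1}}`,
the curve `C_R` is `𝔽_{p^{2m}}`-minimal and not `𝔽_{p^t}`-extremal for `t < 2m`: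
its `𝔽_p`-period is `2m` and its parity is `+1`. -/
theorem statement16 (k m : ℕ) (hk : 1 ≤ k) (hm : 4 ≤ m) (hme : Even m) :
    (Nat.card {z : GaloisField 2 (k * (2 * m)) × GaloisField 2 (k * (2 * m)) //
        z.2 ^ 2 ^ k + z.2
          = z.1 * ∑ i ∈ Finset.Icc 1 (m / 2), z.1 ^ (2 ^ k) ^ (2 * i - 1)} : ℤ)
      = 2 ^ (k * (2 * m)) - (2 ^ k - 1) * 2 ^ (k * (2 * m - 1)) ∧
    ∀ t : ℕ, 1 ≤ t → t < 2 * m →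
      ((Nat.card {z : GaloisField 2 (k * t) × GaloisField 2 (k * t) //
          z.2 ^ 2 ^ k + z.2
            = z.1 * ∑ i ∈ Finset.Icc 1 (m / 2), z.1 ^ (2 ^ k) ^ (2 * i - 1)} : ℤ)
          - 2 ^ (k * t)) ^ 2
        ≠ (2 ^ k - 1) ^ 2 * (2 ^ k) ^ (2 * (m - 1)) * 2 ^ (k * t) := by
  constructor
  · letI : Fintype (GaloisField 2 (k * (2 * m))) := Fintype.ofFinite _
    have hcard : Fintype.card (GaloisField 2 (k * (2 * m))) = 2 ^ (k * (2 * m)) := by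
      rw [← Nat.card_eq_fintype_card]
      exact GaloisField.card 2 _ (by positivity)
    have h := part1_count (K := GaloisField 2 (k * (2 * m))) hk hm hme hcard
    rw [h]
    have hsplit : k * (2 * m) = k + k * (2 * m - 1) := by
      obtain ⟨m', hm'⟩ : ∃ m', 2 * m = m' + 1 := ⟨2 * m - 1, by omega⟩
      rw [hm', show m' + 1 - 1 = m' from by omega, Nat.mul_add, Nat.mul_one]
      ring
    push_cast
    rw [hsplit, pow_add]
    ring
  · intro t ht1 ht2
    letI : Fintype (GaloisField 2 (k * t)) := Fintype.ofFinite _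
    have hcard : Fintype.card (GaloisField 2 (k * t)) = 2 ^ (k * t) := by
      rw [← Nat.card_eq_fintype_card]
      exact GaloisField.card 2 _ (by positivity)
    exact part2_ne (K := GaloisField 2 (k * t)) hk ht1 hm hme ht2 hcard


end
end
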